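/- arXiv:0910.2743 — 7 statements merged into one kernel-verified Lean document; each statement's English description precedes it below -/
import Mathlib

section
/- Let 0 < a₁ ≤ 1 and a₂ ≥ 0, let 0 ≤ δ ≤ 1, and define the sequences r₁(t) = a₁/(t+1)^δ and r₂(t) = a₂/(t+1)^δ for integers t ≥ 0. Then there exists a constant K > 0 such that for all nonnegative integers s < t, 0 ≤ Σ_{k=s}^{t-1} [ Π_{l=k+1}^{t-1} (1 − r₁(l)) ] · r₂(k) ≤ K; in particular K can be chosen independently of s and t. -/
private lemma telescope_Ico (g : ℕ → ℝ) :
    ∀ s t : ℕ, s ≤ t → ∑ k ∈ Finset.Ico s t, (g (k + 1) - g k) = g t - g s := by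
  intro s t hst
  induction t, hst using Nat.le_induction with
  | base => simp
  | succ n hn ih =>
    rw [Finset.sum_Ico_succ_top (by omega), ih]
    ring

/-- Lemma 18 (first part) of Kar-Moura-Ramanan, used for DILAND:
for `r₁(t) = a₁/(t+1)^δ`, `r₂(t) = a₂/(t+1)^δ` with `0 < a₁ ≤ 1`, `a₂ ≥ 0`,
`0 ≤ δ ≤ 1`, the sums `∑_{k=s}^{t-1} (∏_{l=k+1}^{t-1} (1 - r₁ l)) r₂ k`
are nonnegative and uniformly bounded by a constant `K` independent of `s, t`. -/
theorem diland_weight_sum_bounded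
    (a₁ a₂ δ : ℝ) (ha₁ : 0 < a₁) (ha₁' : a₁ ≤ 1) (ha₂ : 0 ≤ a₂)
    (hδ0 : 0 ≤ δ) (hδ1 : δ ≤ 1)
    (r₁ r₂ : ℕ → ℝ)
    (hr₁ : ∀ t : ℕ, r₁ t = a₁ / ((t : ℝ) + 1) ^ δ)
    (hr₂ : ∀ t : ℕ, r₂ t = a₂ / ((t : ℝ) + 1) ^ δ) :
    ∃ K : ℝ, 0 < K ∧ ∀ s t : ℕ, s < t →
      0 ≤ ∑ k ∈ Finset.Ico s t, (∏ l ∈ Finset.Ico (k + 1) t, (1 - r₁ l)) * r₂ k ∧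
      ∑ k ∈ Finset.Ico s t, (∏ l ∈ Finset.Ico (k + 1) t, (1 - r₁ l)) * r₂ k ≤ K := by
  have hpow : ∀ l : ℕ, (1 : ℝ) ≤ ((l : ℝ) + 1) ^ δ := by
    intro l
    have : (1:ℝ) ≤ (l:ℝ) + 1 := by have := Nat.cast_nonneg (α := ℝ) l; linarith
    exact Real.one_le_rpow this hδ0
  have hpowpos : ∀ l : ℕ, (0 : ℝ) < ((l : ℝ) + 1) ^ δ := by
    intro l; positivity
  have hr₁nonneg : ∀ l : ℕ, 0 ≤ r₁ l := by
    intro l; rw [hr₁]; positivity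
  have hr₁le : ∀ l : ℕ, r₁ l ≤ 1 := by
    intro l
    rw [hr₁, div_le_one (hpowpos l)]
    linarith [hpow l]
  have hr₂nonneg : ∀ l : ℕ, 0 ≤ r₂ l := by
    intro l; rw [hr₂]; positivity
  have hr₂eq : ∀ l : ℕ, r₂ l = (a₂ / a₁) * r₁ l := by
    intro l
    rw [hr₁, hr₂]
    field_simp
  refine ⟨a₂ / a₁ + 1, by positivity, fun s t hst => ?_⟩
  set g : ℕ → ℝ := fun k => ∏ l ∈ Finset.Ico k t, (1 - r₁ l) with hg
  have hgnonneg : ∀ k, 0 ≤ g k := by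
    intro k
    exact Finset.prod_nonneg fun l _ => by linarith [hr₁le l]
  constructor
  · apply Finset.sum_nonneg
    intro k _
    exact mul_nonneg (hgnonneg (k + 1)) (hr₂nonneg k)
  · have hterm : ∀ k ∈ Finset.Ico s t,
        (∏ l ∈ Finset.Ico (k + 1) t, (1 - r₁ l)) * r₂ k
          = (a₂ / a₁) * (g (k + 1) - g k) := by
      intro k hk
      have hkt : k < t := (Finset.mem_Ico.mp hk).2
      have hgk : g k = (1 - r₁ k) * g (k + 1) := by
        rw [hg]
        exact Finset.prod_eq_prod_Ico_succ_bot hkt _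
      rw [hr₂eq, hgk]
      ring
    rw [Finset.sum_congr rfl hterm, ← Finset.mul_sum,
      telescope_Ico g s t hst.le]
    have hgt : g t = 1 := by simp [hg]
    have h1 : (a₂ / a₁) * (g t - g s) ≤ a₂ / a₁ := by
      rw [hgt]
      have := hgnonneg s
      nlinarith [div_nonneg ha₂ ha₁.le]
    linarith
end

section
/- Let 0 < a₁ ≤ 1 and a₂ ≥ 0, let 0 ≤ δ₁ < δ₂ with δ₁ ≤ 1, and define r₁(t) = a₁/(t+1)^{δ₁} and r₂(t) = a₂/(t+1)^{δ₂} for integers t ≥ 0. Then for every fixed nonnegative integer s, lim_{t→∞} Σ_{k=s}^{t-1} [ Π_{l=k+1}^{t-1} (1 − r₁(l)) ] · r₂(k) = 0. -/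
open Filter

private lemma diland_tele (f : ℕ → ℝ) (m t : ℕ) (h : m ≤ t) :
    ∑ k ∈ Finset.Ico m t, (∏ l ∈ Finset.Ico (k + 1) t, (1 - f l)) * f k
      = 1 - ∏ l ∈ Finset.Ico m t, (1 - f l) := by
  induction t, h using Nat.le_induction with
  | base => simp
  | succ t ht ih =>
    rw [Finset.sum_Ico_succ_top ht, Finset.prod_Ico_succ_top ht]
    have h1 : ∀ k ∈ Finset.Ico m t,
        (∏ l ∈ Finset.Ico (k + 1) (t + 1), (1 - f l)) * f k
          = ((∏ l ∈ Finset.Ico (k + 1) t, (1 - f l)) * f k) * (1 - f t) := by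
      intro k hk
      rw [Finset.prod_Ico_succ_top (Finset.mem_Ico.mp hk).2]
      ring
    rw [Finset.sum_congr rfl h1, ← Finset.sum_mul, ih, Finset.Ico_self]
    simp; ring

/-- Lemma 18 (second part) of Kar-Moura-Ramanan, used for DILAND:
for `r₁(t) = a₁/(t+1)^δ₁`, `r₂(t) = a₂/(t+1)^δ₂` with `0 < a₁ ≤ 1`, `a₂ ≥ 0`,
`0 ≤ δ₁ < δ₂`, `δ₁ ≤ 1`, and every fixed `s`, the sums
`∑_{k=s}^{t-1} (∏_{l=k+1}^{t-1} (1 - r₁ l)) r₂ k` tend to `0` as `t → ∞`. -/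
theorem diland_weight_sum_tendsto_zero
    (a₁ a₂ δ₁ δ₂ : ℝ) (ha₁ : 0 < a₁) (ha₁' : a₁ ≤ 1) (ha₂ : 0 ≤ a₂)
    (hδ₁0 : 0 ≤ δ₁) (hδ : δ₁ < δ₂) (hδ₁1 : δ₁ ≤ 1)
    (r₁ r₂ : ℕ → ℝ)
    (hr₁ : ∀ t : ℕ, r₁ t = a₁ / ((t : ℝ) + 1) ^ δ₁)
    (hr₂ : ∀ t : ℕ, r₂ t = a₂ / ((t : ℝ) + 1) ^ δ₂)
    (s : ℕ) :
    Tendsto (fun t : ℕ =>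
        ∑ k ∈ Finset.Ico s t, (∏ l ∈ Finset.Ico (k + 1) t, (1 - r₁ l)) * r₂ k)
      atTop (nhds 0) := by
  -- basic bounds on r₁, r₂
  have hpow1 : ∀ l : ℕ, (1 : ℝ) ≤ ((l : ℝ) + 1) ^ δ₁ := fun l =>
    Real.one_le_rpow (le_add_of_nonneg_left (Nat.cast_nonneg l)) hδ₁0
  have hpospow : ∀ l : ℕ, (0 : ℝ) < ((l : ℝ) + 1) ^ δ₁ := fun l =>
    lt_of_lt_of_le one_pos (hpow1 l)
  have hr₁pos : ∀ l : ℕ, 0 < r₁ l := fun l => by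
    rw [hr₁ l]; exact div_pos ha₁ (hpospow l)
  have hr₁le1 : ∀ l : ℕ, r₁ l ≤ 1 := fun l => by
    rw [hr₁ l, div_le_one (hpospow l)]; exact le_trans ha₁' (hpow1 l)
  have hfac0 : ∀ l : ℕ, (0 : ℝ) ≤ 1 - r₁ l := fun l => by linarith [hr₁le1 l]
  have hfac1 : ∀ l : ℕ, (1 : ℝ) - r₁ l ≤ 1 := fun l => by linarith [hr₁pos l]
  have hr₂0 : ∀ k : ℕ, 0 ≤ r₂ k := fun k => by
    rw [hr₂ k]
    have : (0:ℝ) < ((k:ℝ)+1) ^ δ₂ := Real.rpow_pos_of_pos (by positivity) _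
    positivity
  have hprod0 : ∀ m t : ℕ, (0 : ℝ) ≤ ∏ l ∈ Finset.Ico m t, (1 - r₁ l) := fun m t =>
    Finset.prod_nonneg fun l _ => hfac0 l
  have hprod1 : ∀ m t : ℕ, (∏ l ∈ Finset.Ico m t, (1 - r₁ l)) ≤ 1 := fun m t =>
    Finset.prod_le_one (fun l _ => hfac0 l) (fun l _ => hfac1 l)
  -- r₁ l ≥ a₁/(l+1)
  have hr₁ge : ∀ l : ℕ, a₁ / ((l : ℝ) + 1) ≤ r₁ l := fun l => by
    rw [hr₁ l]
    apply div_le_div_of_nonneg_left ha₁.le (hpospow l)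
    calc ((l:ℝ)+1) ^ δ₁ ≤ ((l:ℝ)+1) ^ (1:ℝ) :=
          Real.rpow_le_rpow_of_exponent_le (le_add_of_nonneg_left (Nat.cast_nonneg l)) hδ₁1
      _ = (l:ℝ)+1 := Real.rpow_one _
  -- sums of r₁ over Ico m t tend to ∞
  have hsum_top : ∀ m : ℕ,
      Tendsto (fun t => ∑ l ∈ Finset.Ico m t, r₁ l) atTop atTop := by
    intro m
    have h1 : Tendsto (fun t : ℕ =>
        a₁ * ((∑ i ∈ Finset.range t, 1 / ((i:ℝ) + 1))
          - ∑ i ∈ Finset.range m, 1 / ((i:ℝ) + 1))) atTop atTop := by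
      apply Tendsto.const_mul_atTop ha₁
      exact tendsto_atTop_add_const_right _ _
        Real.tendsto_sum_range_one_div_nat_succ_atTop
    apply tendsto_atTop_mono' _ _ h1
    filter_upwards [eventually_ge_atTop m] with t ht
    have : ∑ i ∈ Finset.Ico m t, (1:ℝ) / ((i:ℝ) + 1)
        = (∑ i ∈ Finset.range t, 1 / ((i:ℝ) + 1))
          - ∑ i ∈ Finset.range m, 1 / ((i:ℝ) + 1) := by
      rw [eq_sub_iff_add_eq, Finset.range_eq_Ico, add_comm]
      rw [Finset.range_eq_Ico]
      exact Finset.sum_Ico_consecutive (fun i : ℕ => (1:ℝ) / ((i:ℝ) + 1)) (Nat.zero_le m) ht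
    rw [← this, Finset.mul_sum]
    apply Finset.sum_le_sum
    intro l _
    rw [mul_one_div]
    exact hr₁ge l
  -- product over Ico m t tends to 0
  have hprod_zero : ∀ m : ℕ,
      Tendsto (fun t => ∏ l ∈ Finset.Ico m t, (1 - r₁ l)) atTop (nhds 0) := by
    intro m
    have hg : Tendsto (fun t : ℕ => Real.exp (-(∑ l ∈ Finset.Ico m t, r₁ l)))
        atTop (nhds 0) := by
      simpa [Function.comp_def] using
        Real.tendsto_exp_neg_atTop_nhds_zero.comp (hsum_top m)
    apply squeeze_zero (fun t => hprod0 m t) _ hg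
    · intro t
      calc (∏ l ∈ Finset.Ico m t, (1 - r₁ l))
          ≤ ∏ l ∈ Finset.Ico m t, Real.exp (-(r₁ l)) :=
            Finset.prod_le_prod (fun l _ => hfac0 l)
              (fun l _ => by
                have := Real.add_one_le_exp (-(r₁ l))
                linarith)
        _ = Real.exp (-(∑ l ∈ Finset.Ico m t, r₁ l)) := by
            rw [← Real.exp_sum]
            congr 1
            rw [Finset.sum_neg_distrib]
  -- main ε argument
  rw [Metric.tendsto_atTop]
  intro ε hε
  -- choose m ≥ s with r₂ k ≤ (ε/2) * r₁ k for all k ≥ m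
  have hq : Tendsto (fun k : ℕ => (a₂ / a₁) * ((k:ℝ) + 1) ^ (δ₁ - δ₂)) atTop (nhds 0) := by
    have h1 : Tendsto (fun x : ℝ => x ^ (-(δ₂ - δ₁))) atTop (nhds 0) :=
      tendsto_rpow_neg_atTop (by linarith)
    have h2 : Tendsto (fun k : ℕ => (k:ℝ) + 1) atTop atTop :=
      tendsto_atTop_add_const_right _ _ tendsto_natCast_atTop_atTop
    have := (h1.comp h2).const_mul (a₂ / a₁)
    simpa [neg_sub] using this
  have hm : ∃ m : ℕ, s ≤ m ∧ ∀ k ≥ m, r₂ k ≤ (ε / 2) * r₁ k := by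
    have := (hq.eventually (eventually_lt_nhds (show (0:ℝ) < ε / 2 by linarith))).and
      (eventually_ge_atTop s)
    obtain ⟨m, hm⟩ := this.exists_forall_of_atTop
    refine ⟨m, (hm m le_rfl).2, fun k hk => ?_⟩
    have hlt := (hm k hk).1
    have hkp : (0:ℝ) < (k:ℝ) + 1 := by positivity
    have key : r₂ k = ((a₂ / a₁) * ((k:ℝ) + 1) ^ (δ₁ - δ₂)) * r₁ k := by
      have h1 : ((k:ℝ) + 1) ^ (δ₁ - δ₂) = ((k:ℝ)+1)^δ₁ / ((k:ℝ)+1)^δ₂ :=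
        Real.rpow_sub hkp δ₁ δ₂
      have h2 : ((k:ℝ)+1) ^ δ₂ ≠ 0 := (Real.rpow_pos_of_pos hkp δ₂).ne'
      have h3 : ((k:ℝ)+1) ^ δ₁ ≠ 0 := (Real.rpow_pos_of_pos hkp δ₁).ne'
      rw [hr₁ k, hr₂ k, h1]
      field_simp
    rw [key]
    exact mul_le_mul_of_nonneg_right hlt.le (hr₁pos k).le
  obtain ⟨m, hsm, hmsmall⟩ := hm
  -- head constant
  set C : ℝ := ∑ k ∈ Finset.Ico s m, r₂ k with hC
  have hC0 : 0 ≤ C := Finset.sum_nonneg fun k _ => hr₂0 k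
  -- choose N with C * prod < ε/2
  have hCP : Tendsto (fun t => C * ∏ l ∈ Finset.Ico m t, (1 - r₁ l)) atTop (nhds 0) := by
    simpa using (hprod_zero m).const_mul C
  have hev : ∀ᶠ t in atTop, C * (∏ l ∈ Finset.Ico m t, (1 - r₁ l)) < ε / 2 :=
    hCP.eventually (eventually_lt_nhds (show (0:ℝ) < ε / 2 by linarith))
  obtain ⟨N, hN⟩ := (hev.and (eventually_ge_atTop m)).exists_forall_of_atTop
  refine ⟨N, fun t ht => ?_⟩
  obtain ⟨hN1, hN2⟩ := hN t ht
  have hmt : m ≤ t := hN2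
  -- the sum is nonnegative
  have hterm0 : ∀ k : ℕ, 0 ≤ (∏ l ∈ Finset.Ico (k + 1) t, (1 - r₁ l)) * r₂ k :=
    fun k => mul_nonneg (hprod0 _ _) (hr₂0 k)
  have hS0 : 0 ≤ ∑ k ∈ Finset.Ico s t, (∏ l ∈ Finset.Ico (k + 1) t, (1 - r₁ l)) * r₂ k :=
    Finset.sum_nonneg fun k _ => hterm0 k
  rw [Real.dist_eq, sub_zero, abs_of_nonneg hS0]
  -- split the sum
  have hsplit : ∑ k ∈ Finset.Ico s t, (∏ l ∈ Finset.Ico (k + 1) t, (1 - r₁ l)) * r₂ k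
      = (∑ k ∈ Finset.Ico s m, (∏ l ∈ Finset.Ico (k + 1) t, (1 - r₁ l)) * r₂ k)
        + ∑ k ∈ Finset.Ico m t, (∏ l ∈ Finset.Ico (k + 1) t, (1 - r₁ l)) * r₂ k :=
    (Finset.sum_Ico_consecutive _ hsm hmt).symm
  rw [hsplit]
  have hhead : ∑ k ∈ Finset.Ico s m, (∏ l ∈ Finset.Ico (k + 1) t, (1 - r₁ l)) * r₂ k
      ≤ C * ∏ l ∈ Finset.Ico m t, (1 - r₁ l) := by
    rw [hC, Finset.sum_mul]
    apply Finset.sum_le_sum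
    intro k hk
    have hkm : k + 1 ≤ m := (Finset.mem_Ico.mp hk).2
    have hsplitp : (∏ l ∈ Finset.Ico (k + 1) m, (1 - r₁ l))
        * ∏ l ∈ Finset.Ico m t, (1 - r₁ l) = ∏ l ∈ Finset.Ico (k + 1) t, (1 - r₁ l) :=
      Finset.prod_Ico_consecutive _ hkm hmt
    rw [← hsplitp, mul_comm (r₂ k)]
    apply mul_le_mul_of_nonneg_right _ (hr₂0 k)
    calc (∏ l ∈ Finset.Ico (k + 1) m, (1 - r₁ l)) * ∏ l ∈ Finset.Ico m t, (1 - r₁ l)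
        ≤ 1 * ∏ l ∈ Finset.Ico m t, (1 - r₁ l) :=
          mul_le_mul_of_nonneg_right (hprod1 _ _) (hprod0 _ _)
      _ = _ := one_mul _
  have htail : ∑ k ∈ Finset.Ico m t, (∏ l ∈ Finset.Ico (k + 1) t, (1 - r₁ l)) * r₂ k
      ≤ ε / 2 := by
    calc ∑ k ∈ Finset.Ico m t, (∏ l ∈ Finset.Ico (k + 1) t, (1 - r₁ l)) * r₂ k
        ≤ ∑ k ∈ Finset.Ico m t,
            (∏ l ∈ Finset.Ico (k + 1) t, (1 - r₁ l)) * ((ε / 2) * r₁ k) := by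
          apply Finset.sum_le_sum
          intro k hk
          exact mul_le_mul_of_nonneg_left
            (hmsmall k (Finset.mem_Ico.mp hk).1) (hprod0 _ _)
      _ = (ε / 2) * ∑ k ∈ Finset.Ico m t, (∏ l ∈ Finset.Ico (k + 1) t, (1 - r₁ l)) * r₁ k := by
          rw [Finset.mul_sum]; apply Finset.sum_congr rfl; intro k _; ring
      _ = (ε / 2) * (1 - ∏ l ∈ Finset.Ico m t, (1 - r₁ l)) := by
          rw [diland_tele r₁ m t hmt]
      _ ≤ (ε / 2) * 1 := by
          apply mul_le_mul_of_nonneg_left _ (by linarith)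
          linarith [hprod0 m t]
      _ = ε / 2 := mul_one _
  linarith
end

section
/- Let P be an M×M real matrix with nonnegative entries whose row sums are all at most 1. Suppose that for every index i there exist indices i = i₀, i₁, …, i_r such that P_{i_{k}, i_{k+1}} > 0 for all k < r and the i_r-th row sum of P is strictly less than 1. Then every eigenvalue of P, viewed as a matrix over ℂ, has modulus strictly less than 1. -/
open Matrix Polynomial Finset

lemma eval_charpoly' {n : Type*} [Fintype n] [DecidableEq n] (A : Matrix n n ℂ) (z : ℂ) :
    A.charpoly.eval z = (z • (1 : Matrix n n ℂ) - A).det := by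
  rw [Matrix.charpoly, eval_det, matPolyEquiv_charmatrix]
  simp [Matrix.scalar, smul_one_eq_diagonal]
  rfl

section aux
variable {M : ℕ} (P : Matrix (Fin M) (Fin M) ℝ)

lemma pow_nonneg' (hnonneg : ∀ i j, 0 ≤ P i j) :
    ∀ n i j, 0 ≤ (P ^ n) i j := by
  intro n
  induction n with
  | zero => intro i j; by_cases h : i = j <;> simp [h, Matrix.one_apply]
  | succ n ih =>
    intro i j
    rw [pow_succ, Matrix.mul_apply]
    exact Finset.sum_nonneg fun k _ => mul_nonneg (ih i k) (hnonneg k j)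

noncomputable def rowSum (n : ℕ) (i : Fin M) : ℝ := ∑ j, (P ^ n) i j

lemma rowSum_zero (i : Fin M) : rowSum P 0 i = 1 := by
  simp [rowSum, Matrix.one_apply]

lemma rowSum_succ (n : ℕ) (i : Fin M) :
    rowSum P (n + 1) i = ∑ k, P i k * rowSum P n k := by
  simp only [rowSum, pow_succ', Matrix.mul_apply]
  rw [Finset.sum_comm]
  simp [Finset.mul_sum]

lemma rowSum_le_one (hnonneg : ∀ i j, 0 ≤ P i j) (hrow : ∀ i, ∑ j, P i j ≤ 1) :
    ∀ n i, rowSum P n i ≤ 1 := by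
  intro n
  induction n with
  | zero => intro i; simp [rowSum_zero]
  | succ n ih =>
    intro i
    rw [rowSum_succ]
    calc ∑ k, P i k * rowSum P n k ≤ ∑ k, P i k * 1 :=
          Finset.sum_le_sum fun k _ => mul_le_mul_of_nonneg_left (ih k) (hnonneg i k)
      _ ≤ 1 := by simpa using hrow i

lemma rowSum_antitone (hnonneg : ∀ i j, 0 ≤ P i j) (hrow : ∀ i, ∑ j, P i j ≤ 1) :
    ∀ n m, n ≤ m → ∀ i, rowSum P m i ≤ rowSum P n i := by
  have step : ∀ n i, rowSum P (n + 1) i ≤ rowSum P n i := by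
    intro n
    induction n with
    | zero =>
      intro i
      rw [rowSum_succ, rowSum_zero P i]
      calc ∑ k, P i k * rowSum P 0 k = ∑ k, P i k := by simp [rowSum_zero]
        _ ≤ 1 := hrow i
    | succ n ih =>
      intro i
      rw [rowSum_succ, rowSum_succ]
      exact Finset.sum_le_sum fun k _ => mul_le_mul_of_nonneg_left (ih k) (hnonneg i k)
  intro n m hnm i
  induction m with
  | zero => simp_all
  | succ m ih =>
    rcases Nat.lt_or_ge n (m + 1) with h | h
    · exact (step m i).trans (ih (Nat.lt_succ_iff.mp h))
    · have : n = m + 1 := le_antisymm hnm h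
      simp [this]

lemma rowSum_lt_one_step (hnonneg : ∀ i j, 0 ≤ P i j) (hrow : ∀ i, ∑ j, P i j ≤ 1)
    {n : ℕ} {i j : Fin M} (hij : 0 < P i j) (hj : rowSum P n j < 1) :
    rowSum P (n + 1) i < 1 := by
  rw [rowSum_succ]
  have h1 : ∑ k, P i k * rowSum P n k < ∑ k, P i k := by
    apply Finset.sum_lt_sum
    · intro k _
      nlinarith [rowSum_le_one P hnonneg hrow n k, hnonneg i k]
    · exact ⟨j, Finset.mem_univ j, by nlinarith⟩
  exact h1.trans_le (hrow i)

lemma exists_rowSum_lt_one (hnonneg : ∀ i j, 0 ≤ P i j) (hrow : ∀ i, ∑ j, P i j ≤ 1)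
    (hreach : ∀ i : Fin M, ∃ (r : ℕ) (p : ℕ → Fin M), p 0 = i ∧
      (∀ k : ℕ, k < r → 0 < P (p k) (p (k + 1))) ∧
      ∑ j, P (p r) j < 1) :
    ∀ i, ∃ n, rowSum P n i < 1 := by
  intro i
  obtain ⟨r, p, hp0, hpath, hend⟩ := hreach i
  have key : ∀ m k, k + m = r → rowSum P (m + 1) (p k) < 1 := by
    intro m
    induction m with
    | zero =>
      intro k hk
      simp only [Nat.add_zero] at hk
      subst hk
      simpa [rowSum, pow_one] using hend
    | succ m ih =>
      intro k hk
      have hk' : k + 1 + m = r := by omega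
      have := ih (k + 1) hk'
      exact rowSum_lt_one_step P hnonneg hrow (hpath k (by omega)) this
  exact ⟨r + 1, by simpa [hp0] using key r 0 (by omega)⟩

end aux



/-- `ρ(P) < 1`: every eigenvalue of `P`, viewed as a matrix over `ℂ`
(equivalently, every complex root of its characteristic polynomial),
has modulus strictly less than `1`. -/
def SpecRadiusLtOne {M : ℕ} (P : Matrix (Fin M) (Fin M) ℝ) : Prop :=
  ∀ z : ℂ, (P.map (algebraMap ℝ ℂ)).charpoly.IsRoot z → ‖z‖ < 1

/-- Absorbing-Markov-chain fact underlying DILOC: if `P` has nonnegative entries,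
all row sums at most `1`, and from every index `i` there is a path
`i = i₀, i₁, …, i_r` with `P_{i_k, i_{k+1}} > 0` leading to an index `i_r` whose
row sum is strictly less than `1`, then the spectral radius of `P` is `< 1`. -/
theorem specRadius_lt_one_of_substochastic_reachable
    (M : ℕ) (P : Matrix (Fin M) (Fin M) ℝ)
    (hnonneg : ∀ i j : Fin M, 0 ≤ P i j)
    (hrow : ∀ i : Fin M, ∑ j, P i j ≤ 1)
    (hreach : ∀ i : Fin M, ∃ (r : ℕ) (p : ℕ → Fin M), p 0 = i ∧
      (∀ k : ℕ, k < r → 0 < P (p k) (p (k + 1))) ∧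
      ∑ j, P (p r) j < 1) :
    SpecRadiusLtOne P := by
  intro z hz
  -- choose N with all row sums of P^N < 1
  have hchoose : ∀ i, ∃ n, rowSum P n i < 1 :=
    exists_rowSum_lt_one P hnonneg hrow hreach
  set N : ℕ := (Finset.univ.sup fun i : Fin M => (hchoose i).choose) + 1 with hN
  have hNpos : 1 ≤ N := Nat.le_add_left 1 _
  have hNlt : ∀ i, rowSum P N i < 1 := by
    intro i
    have h1 : (hchoose i).choose ≤ N := by
      rw [hN]; exact Nat.le_succ_of_le (Finset.le_sup (f := fun i => (hchoose i).choose) (Finset.mem_univ i))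
    exact lt_of_le_of_lt (rowSum_antitone P hnonneg hrow _ _ h1 i) (hchoose i).choose_spec
  -- get an eigenvector
  set A : Matrix (Fin M) (Fin M) ℂ := P.map (algebraMap ℝ ℂ) with hA
  have hdet : (z • (1 : Matrix (Fin M) (Fin M) ℂ) - A).det = 0 := by
    rw [← eval_charpoly']; exact hz
  obtain ⟨v, hv, hvec⟩ := (Matrix.exists_mulVec_eq_zero_iff).mpr hdet
  have heig : A.mulVec v = z • v := by
    rw [Matrix.sub_mulVec, sub_eq_zero] at hvec
    rw [← hvec, Matrix.smul_mulVec, Matrix.one_mulVec]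
  have heigN : ∀ n, (A ^ n).mulVec v = z ^ n • v := by
    intro n
    induction n with
    | zero => simp
    | succ n ih =>
      rw [pow_succ', ← Matrix.mulVec_mulVec, ih, Matrix.mulVec_smul, heig, smul_smul, ← pow_succ]
  have hAN : ∀ n (i j : Fin M), (A ^ n) i j = ((P ^ n) i j : ℂ) := by
    intro n i j
    have : A ^ n = (P ^ n).map (algebraMap ℝ ℂ) := by
      rw [hA, ← RingHom.mapMatrix_apply, ← RingHom.mapMatrix_apply, map_pow]
    rw [this]; rfl
  -- maximizer of |v|
  obtain ⟨j0, hj0⟩ : ∃ j, v j ≠ 0 := Function.ne_iff.mp hv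
  obtain ⟨i, -, hi⟩ := Finset.exists_max_image Finset.univ (fun i => ‖v i‖)
    ⟨j0, Finset.mem_univ j0⟩
  have hvi : 0 < ‖v i‖ :=
    lt_of_lt_of_le (by simpa using hj0) (hi j0 (Finset.mem_univ j0))
  have key : ‖z‖ ^ N * ‖v i‖ ≤ rowSum P N i * ‖v i‖ := by
    have h1 : ((A ^ N).mulVec v) i = z ^ N * v i := by rw [heigN]; simp
    calc ‖z‖ ^ N * ‖v i‖ = ‖((A ^ N).mulVec v) i‖ := by
          rw [h1, norm_mul, norm_pow]
      _ = ‖∑ j, (A ^ N) i j * v j‖ := by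
          simp [Matrix.mulVec, dotProduct]
      _ ≤ ∑ j, ‖(A ^ N) i j * v j‖ := norm_sum_le _ _
      _ = ∑ j, (P ^ N) i j * ‖v j‖ := by
          refine Finset.sum_congr rfl fun j _ => ?_
          rw [norm_mul, hAN, Complex.norm_real, Real.norm_eq_abs, abs_of_nonneg (pow_nonneg' P hnonneg N i j)]
      _ ≤ ∑ j, (P ^ N) i j * ‖v i‖ :=
          Finset.sum_le_sum fun j _ => mul_le_mul_of_nonneg_left (hi j (Finset.mem_univ j))
            (pow_nonneg' P hnonneg N i j)
      _ = rowSum P N i * ‖v i‖ := by rw [rowSum, Finset.sum_mul]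
  have habs : ‖z‖ ^ N < 1 := by
    have h2 : ‖z‖ ^ N ≤ rowSum P N i := le_of_mul_le_mul_right key hvi
    exact lt_of_le_of_lt h2 (hNlt i)
  by_contra h
  push_neg at h
  exact absurd habs (not_lt.mpr (one_le_pow₀ h))
end

section
/- Let P be an M×M real matrix such that every eigenvalue of P, viewed as a matrix over ℂ, has modulus strictly less than 1, let B be an M×n real matrix, and let u ∈ ℝⁿ. Let (α(t))_{t≥0} be a sequence of nonnegative reals with α(t) → 0 and Σ_t α(t) = ∞. Then for any initial x(0) ∈ ℝ^M, the iteration x(t+1) = (1 − α(t))·x(t) + α(t)·(P·x(t) + B·u) converges as t → ∞ to (I − P)^{-1}·B·u. -/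
open Filter

section DilandAux

open Polynomial Finset

attribute [local instance] Matrix.linftyOpNormedRing Matrix.linftyOpNormedAlgebra
  Matrix.linftyOpSeminormedAddCommGroup

private lemma diland_eval_charpoly {m : ℕ} {K : Type*} [Field K]
    (A : Matrix (Fin m) (Fin m) K) (z : K) :
    A.charpoly.eval z = (z • (1 : Matrix (Fin m) (Fin m) K) - A).det := by
  rw [Matrix.charpoly, ← Polynomial.coe_evalRingHom, RingHom.map_det]
  congr 1
  ext i j
  by_cases h : i = j <;>
    simp [h, Matrix.charmatrix_apply, Matrix.one_apply, Matrix.diagonal_apply]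

private lemma diland_norm_map_complex {m : ℕ} (Q : Matrix (Fin m) (Fin m) ℝ) :
    ‖Q.map (algebraMap ℝ ℂ)‖ = ‖Q‖ := by
  rw [Matrix.linfty_opNorm_def, Matrix.linfty_opNorm_def]
  congr 1
  apply Finset.sup_congr rfl
  intro i _
  congr 1
  ext j
  simp [Matrix.map_apply]

private lemma diland_exists_pow_norm_lt {m : ℕ} (hm : 0 < m) (P : Matrix (Fin m) (Fin m) ℝ)
    (hP : ∀ z : ℂ, (P.map (algebraMap ℝ ℂ)).charpoly.IsRoot z → ‖z‖ < 1) :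
    ∃ k : ℕ, 1 ≤ k ∧ ‖P ^ k‖ < 1 := by
  haveI : Nonempty (Fin m) := ⟨⟨0, hm⟩⟩
  set A := P.map (algebraMap ℝ ℂ) with hA
  haveI : CompleteSpace (Matrix (Fin m) (Fin m) ℂ) := FiniteDimensional.complete ℂ _
  have hrad : spectralRadius ℂ A < 1 := by
    have := spectrum.spectralRadius_lt_of_forall_lt A (r := 1) ?_
    · simpa using this
    · intro z hz
      have h1 : ‖z‖ < 1 := hP z (by
        have h := spectrum.mem_iff.mp hz
        rw [Polynomial.IsRoot, diland_eval_charpoly]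
        by_contra hdet
        exact h <| by
          rw [Algebra.algebraMap_eq_smul_one]
          exact (Matrix.isUnit_iff_isUnit_det _).mpr (isUnit_iff_ne_zero.mpr hdet))
      have : ‖z‖ < 1 := h1
      exact_mod_cast this
  have hg := spectrum.pow_nnnorm_pow_one_div_tendsto_nhds_spectralRadius A
  have hev : ∀ᶠ k : ℕ in atTop, ((‖A ^ k‖₊ : ENNReal)) ^ (1 / (k:ℝ)) < 1 :=
    hg.eventually_lt_const hrad
  obtain ⟨k, hk1, hklt⟩ := ((eventually_ge_atTop 1).and hev).exists
  refine ⟨k, hk1, ?_⟩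
  have hkpos : (0:ℝ) < 1 / (k:ℝ) := by positivity
  have hnn : ‖A ^ k‖₊ < 1 := by
    by_contra hge
    push_neg at hge
    have : (1 : ENNReal) ≤ ((‖A ^ k‖₊ : ENNReal)) ^ (1 / (k:ℝ)) := by
      calc (1:ENNReal) = 1 ^ (1/(k:ℝ)) := by rw [ENNReal.one_rpow]
        _ ≤ _ := ENNReal.rpow_le_rpow (by exact_mod_cast hge) hkpos.le
    exact absurd hklt (not_lt.mpr this)
  have hnorm : ‖A ^ k‖ < 1 := hnn
  have hpowmap : A ^ k = (P ^ k).map (algebraMap ℝ ℂ) := by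
    rw [hA]
    exact (map_pow (RingHom.mapMatrix (algebraMap ℝ ℂ)) P k).symm
  rwa [hpowmap, diland_norm_map_complex] at hnorm

private lemma diland_error_tendsto_zero {m : ℕ} (P : Matrix (Fin m) (Fin m) ℝ)
    (k : ℕ) (hk : 1 ≤ k) (hPk : ‖P ^ k‖ < 1)
    (α : ℕ → ℝ) (hα0 : ∀ t, 0 ≤ α t)
    (hαlim : Tendsto α atTop (nhds 0))
    (hαsum : Tendsto (fun T : ℕ => ∑ t ∈ Finset.range T, α t) atTop atTop)
    (e : ℕ → Fin m → ℝ)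
    (he : ∀ t, e (t + 1) = (1 - α t) • e t + α t • P.mulVec (e t)) :
    Tendsto e atTop (nhds 0) := by
  set c := ‖P ^ k‖ with hc
  have hc0 : 0 ≤ c := norm_nonneg _
  set d := (c + 1) / 2 with hd
  have hd0 : 0 < d := by positivity
  have hd1 : d < 1 := by rw [hd]; linarith
  have hcd : c ≤ d := by rw [hd]; linarith
  set r := d ^ ((k : ℝ)⁻¹) with hr
  have hkR : (0:ℝ) < (k:ℝ)⁻¹ := by positivity
  have hr0 : 0 < r := Real.rpow_pos_of_pos hd0 _
  have hr1 : r < 1 := Real.rpow_lt_one hd0.le hd1 hkR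
  have hrk : r ^ k = d := by
    rw [hr, ← Real.rpow_natCast (d ^ ((k:ℝ)⁻¹)) k, ← Real.rpow_mul hd0.le,
      inv_mul_cancel₀ (show (k:ℝ) ≠ 0 by exact_mod_cast (by omega : k ≠ 0)), Real.rpow_one]
  have hPkr : ‖P ^ k‖ ≤ r ^ k := by rw [hrk]; exact hcd
  set N : (Fin m → ℝ) → ℝ := fun v => ∑ j ∈ Finset.range k, r ^ (k - 1 - j) * ‖(P ^ j).mulVec v‖
    with hN
  have hN0 : ∀ v, 0 ≤ N v := fun v => Finset.sum_nonneg fun j _ => by positivity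
  have hNlow : ∀ v, r ^ (k - 1) * ‖v‖ ≤ N v := by
    intro v
    have h0 : r ^ (k - 1 - 0) * ‖(P ^ 0).mulVec v‖ = r ^ (k - 1) * ‖v‖ := by
      simp [Matrix.one_mulVec]
    rw [← h0]
    exact Finset.single_le_sum (f := fun j => r ^ (k - 1 - j) * ‖(P ^ j).mulVec v‖)
      (fun j _ => by positivity) (Finset.mem_range.mpr hk)
  have hNP : ∀ v, N (P.mulVec v) ≤ r * N v := by
    intro v
    set G : ℕ → ℝ := fun j => r ^ (k - j) * ‖(P ^ j).mulVec v‖ with hG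
    have h1 : ∑ j ∈ Finset.range (k + 1), G j = N (P.mulVec v) + r ^ k * ‖v‖ := by
      rw [Finset.sum_range_succ']
      congr 1
      · apply Finset.sum_congr rfl
        intro j hj
        have hje : k - (j + 1) = k - 1 - j := by omega
        have hpow : (P ^ (j + 1)).mulVec v = (P ^ j).mulVec (P.mulVec v) := by
          rw [pow_succ, ← Matrix.mulVec_mulVec]
        rw [hG]; simp only []; rw [hje, hpow]
      · simp [hG, Matrix.one_mulVec]
    have h2 : ∑ j ∈ Finset.range (k + 1), G j = r * N v + ‖(P ^ k).mulVec v‖ := by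
      rw [Finset.sum_range_succ]
      congr 1
      · rw [hN, Finset.mul_sum]
        apply Finset.sum_congr rfl
        intro j hj
        have hje : k - j = (k - 1 - j) + 1 := by
          have := Finset.mem_range.mp hj; omega
        rw [hG]; simp only []; rw [hje, pow_succ]; ring
      · simp [hG]
    have h3 : ‖(P ^ k).mulVec v‖ ≤ r ^ k * ‖v‖ :=
      (Matrix.linfty_opNorm_mulVec _ _).trans
        (mul_le_mul_of_nonneg_right hPkr (norm_nonneg _))
    nlinarith [h1.symm.trans h2]
  have hNrec : ∀ t, α t ≤ 1 → N (e (t + 1)) ≤ (1 - (1 - r) * α t) * N (e t) := by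
    intro t hαt
    have hterm : ∀ j : ℕ, ‖(P ^ j).mulVec ((1 - α t) • e t + α t • P.mulVec (e t))‖ ≤
        (1 - α t) * ‖(P ^ j).mulVec (e t)‖ + α t * ‖(P ^ j).mulVec (P.mulVec (e t))‖ := by
      intro j
      rw [Matrix.mulVec_add, Matrix.mulVec_smul, Matrix.mulVec_smul]
      refine (norm_add_le _ _).trans ?_
      rw [norm_smul, norm_smul, Real.norm_eq_abs, Real.norm_eq_abs,
        abs_of_nonneg (by linarith), abs_of_nonneg (hα0 t)]
    have hstep : N (e (t + 1)) ≤ (1 - α t) * N (e t) + α t * N (P.mulVec (e t)) := by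
      rw [he t]
      calc N ((1 - α t) • e t + α t • P.mulVec (e t))
          ≤ ∑ j ∈ Finset.range k, r ^ (k - 1 - j) *
            ((1 - α t) * ‖(P ^ j).mulVec (e t)‖ +
              α t * ‖(P ^ j).mulVec (P.mulVec (e t))‖) :=
            Finset.sum_le_sum fun j _ =>
              mul_le_mul_of_nonneg_left (hterm j) (by positivity)
        _ = (1 - α t) * N (e t) + α t * N (P.mulVec (e t)) := by
            rw [hN, Finset.mul_sum, Finset.mul_sum, ← Finset.sum_add_distrib]
            apply Finset.sum_congr rfl
            intro j _
            ring
    have h4 : α t * N (P.mulVec (e t)) ≤ α t * (r * N (e t)) :=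
      mul_le_mul_of_nonneg_left (hNP _) (hα0 t)
    calc N (e (t + 1)) ≤ (1 - α t) * N (e t) + α t * (r * N (e t)) := by linarith
      _ = (1 - (1 - r) * α t) * N (e t) := by ring
  obtain ⟨t0, ht0⟩ := (hαlim.eventually_lt_const (one_pos (α := ℝ))).exists_forall_of_atTop
  set β := 1 - r with hβ
  have hβ0 : 0 < β := by rw [hβ]; linarith
  set S : ℕ → ℝ := fun T => ∑ t ∈ Finset.range T, α t with hS
  have hbound : ∀ t, t0 ≤ t → N (e t) ≤ N (e t0) * Real.exp (-(β * (S t - S t0))) := by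
    intro t ht
    induction t, ht using Nat.le_induction with
    | base => simp
    | succ t ht IH =>
      have hα1 : α t ≤ 1 := (ht0 t ht).le
      have h5 := hNrec t hα1
      have h6 : 1 - β * α t ≤ Real.exp (-(β * α t)) := by
        have := Real.add_one_le_exp (-(β * α t)); linarith
      have h7 : N (e (t + 1)) ≤ Real.exp (-(β * α t)) * N (e t) := by
        calc N (e (t + 1)) ≤ (1 - β * α t) * N (e t) := h5
          _ ≤ Real.exp (-(β * α t)) * N (e t) :=
            mul_le_mul_of_nonneg_right h6 (hN0 _)
      calc N (e (t + 1)) ≤ Real.exp (-(β * α t)) * N (e t) := h7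
        _ ≤ Real.exp (-(β * α t)) * (N (e t0) * Real.exp (-(β * (S t - S t0)))) :=
            mul_le_mul_of_nonneg_left IH (Real.exp_pos _).le
        _ = N (e t0) * Real.exp (-(β * (S (t + 1) - S t0))) := by
            rw [hS]; simp only []
            rw [Finset.sum_range_succ, mul_comm, mul_assoc, ← Real.exp_add]
            ring_nf
  have htail : Tendsto (fun t => N (e t0) * Real.exp (-(β * (S t - S t0)))) atTop (nhds 0) := by
    have h8 : Tendsto (fun t => S t - S t0) atTop atTop := by
      simpa [sub_eq_add_neg] using tendsto_atTop_add_const_right atTop (-(S t0)) hαsum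
    have h9 : Tendsto (fun t => β * (S t - S t0)) atTop atTop := h8.const_mul_atTop hβ0
    have h10 : Tendsto (fun t => -(β * (S t - S t0))) atTop atBot :=
      tendsto_neg_atTop_atBot.comp h9
    have h11 : Tendsto (fun t => Real.exp (-(β * (S t - S t0)))) atTop (nhds 0) :=
      Real.tendsto_exp_atBot.comp h10
    simpa using h11.const_mul (N (e t0))
  rw [tendsto_zero_iff_norm_tendsto_zero]
  have hrp : (0:ℝ) < r ^ (k - 1) := by positivity
  apply squeeze_zero' (Eventually.of_forall fun t => norm_nonneg _)
    (g := fun t => (r ^ (k-1))⁻¹ * (N (e t0) * Real.exp (-(β * (S t - S t0)))))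
  · filter_upwards [eventually_ge_atTop t0] with t ht
    have hle := (hNlow (e t)).trans (hbound t ht)
    rw [← le_div_iff₀' hrp] at hle
    simpa [div_eq_inv_mul] using hle
  · simpa using htail.const_mul ((r ^ (k-1))⁻¹)

end DilandAux

/-- Idealized (noise-free) weighted DILAND update: if `ρ(P) < 1` and the weights
satisfy `α(t) ≥ 0`, `α(t) → 0`, `∑ α(t) = ∞`, then the iteration
`x(t+1) = (1 - α(t))·x(t) + α(t)·(P·x(t) + B·u)` converges to `(I-P)⁻¹·B·u`. -/
theorem diland_idealized_convergence
    (M n : ℕ) (P : Matrix (Fin M) (Fin M) ℝ) (hP : SpecRadiusLtOne P)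
    (B : Matrix (Fin M) (Fin n) ℝ) (u : Fin n → ℝ)
    (α : ℕ → ℝ) (hα0 : ∀ t : ℕ, 0 ≤ α t)
    (hαlim : Tendsto α atTop (nhds 0))
    (hαsum : Tendsto (fun T : ℕ => ∑ t ∈ Finset.range T, α t) atTop atTop)
    (x : ℕ → Fin M → ℝ)
    (hrec : ∀ t : ℕ, x (t + 1) =
      (1 - α t) • x t + α t • (P.mulVec (x t) + B.mulVec u)) :
    Tendsto x atTop (nhds ((1 - P)⁻¹.mulVec (B.mulVec u))) := by
  rcases Nat.eq_zero_or_pos M with hM | hM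
  · subst hM
    haveI : Subsingleton (Fin 0 → ℝ) := ⟨fun a b => funext fun i => i.elim0⟩
    have hx : x = fun _ => (1 - P)⁻¹.mulVec (B.mulVec u) :=
      funext fun t => Subsingleton.elim _ _
    rw [hx]
    exact tendsto_const_nhds
  · obtain ⟨k, hk1, hPk⟩ := diland_exists_pow_norm_lt hM P hP
    have hdet : IsUnit (1 - P).det := by
      rw [isUnit_iff_ne_zero]
      intro h0
      have h1 : ((1 - P).map (algebraMap ℝ ℂ)).det = 0 := by
        have hmd := (RingHom.map_det (algebraMap ℝ ℂ) (1 - P)).symm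
        rw [RingHom.mapMatrix_apply] at hmd
        rw [hmd, h0, map_zero]
      have h2 : (P.map (algebraMap ℝ ℂ)).charpoly.IsRoot 1 := by
        rw [Polynomial.IsRoot, diland_eval_charpoly, one_smul]
        rw [← h1]
        congr 1
        ext i j
        by_cases h : i = j <;> simp [h, Matrix.one_apply, Matrix.map_apply]
      have := hP 1 h2
      simp at this
    set y := (1 - P)⁻¹.mulVec (B.mulVec u) with hy
    have hfix : (1 - P).mulVec y = B.mulVec u := by
      rw [hy, Matrix.mulVec_mulVec, Matrix.mul_nonsing_inv _ hdet, Matrix.one_mulVec]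
    have hBu : B.mulVec u = y - P.mulVec y := by
      rw [← hfix, Matrix.sub_mulVec, Matrix.one_mulVec]
    set e : ℕ → Fin M → ℝ := fun t => x t - y with he
    have herec : ∀ t, e (t + 1) = (1 - α t) • e t + α t • P.mulVec (e t) := by
      intro t
      rw [he]
      simp only []
      rw [hrec t, hBu, Matrix.mulVec_sub]
      module
    have hte := diland_error_tendsto_zero P k hk1 hPk α hα0 hαlim hαsum e herec
    have hfin : Tendsto (fun t => e t + y) atTop (nhds (0 + y)) :=
      hte.add tendsto_const_nhds
    simpa [he] using hfin
end

section
/- Let P be an M×M real matrix such that every eigenvalue of P, viewed as a matrix over ℂ, has modulus strictly less than 1, let B be an M×n real matrix, and let u ∈ ℝⁿ. Let (P_t)_{t≥0} and (B_t)_{t≥0} be sequences of M×M and M×n real matrices, respectively, converging entrywise to P and B. Let α(t) = a/(t+1)^δ with a > 0 and 0 < δ ≤ 1. Then for any initial x(0) ∈ ℝ^M, the sequence defined by x(t+1) = (1 − α(t))·x(t) + α(t)·(P_t·x(t) + B_t·u) is bounded: sup_{t≥0} ‖x(t)‖ < ∞. -/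
open Filter

/-- The Euclidean (2-)norm on `ℝ^M`. -/
noncomputable def euclNorm {M : ℕ} (x : Fin M → ℝ) : ℝ :=
  Real.sqrt (∑ i, x i ^ 2)

section AuxDiland
open Matrix
attribute [local instance] Matrix.linftyOpNormedRing Matrix.linftyOpNormedAlgebra

-- entry bound for linfty op norm
lemma entry_le_linfty {M : ℕ} (A : Matrix (Fin M) (Fin M) ℂ) (i j : Fin M) :
    ‖A i j‖ ≤ ‖A‖ := by
  have h1 : ‖A i j‖₊ ≤ ‖A‖₊ := by
    rw [Matrix.linfty_opNNNorm_def]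
    calc ‖A i j‖₊ ≤ ∑ j', ‖A i j'‖₊ :=
          Finset.single_le_sum (f := fun j' => ‖A i j'‖₊) (fun _ _ => zero_le)
            (Finset.mem_univ j)
      _ ≤ _ := Finset.le_sup (f := fun i => ∑ j', ‖A i j'‖₊) (Finset.mem_univ i)
  exact_mod_cast h1

lemma charpoly_root_of_mem_spectrum {M : ℕ} (A : Matrix (Fin M) (Fin M) ℂ) (z : ℂ)
    (hz : z ∈ spectrum ℂ A) : A.charpoly.IsRoot z := by
  rw [spectrum.mem_iff] at hz
  rw [Matrix.isUnit_iff_isUnit_det, isUnit_iff_ne_zero, not_not] at hz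
  have : A.charpoly.eval z = ((algebraMap ℂ (Matrix (Fin M) (Fin M) ℂ)) z - A).det := by
    rw [Matrix.charpoly]
    rw [show Polynomial.eval z (Matrix.charmatrix A).det
        = (Polynomial.evalRingHom z) (Matrix.charmatrix A).det from rfl,
      RingHom.map_det]
    congr 1
    ext i j
    simp only [RingHom.mapMatrix_apply, Matrix.map_apply]
    by_cases h : i = j
    · subst h
      simp [Matrix.charmatrix_apply_eq, Matrix.algebraMap_matrix_apply]
    · simp [Matrix.charmatrix_apply_ne _ _ _ h, Matrix.algebraMap_matrix_apply, h]
  exact (Polynomial.IsRoot.def).mpr (this.trans hz)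

lemma aux_geom {M : ℕ} (hM : 0 < M) (P : Matrix (Fin M) (Fin M) ℝ)
    (hP : ∀ z : ℂ, (P.map (algebraMap ℝ ℂ)).charpoly.IsRoot z → ‖z‖ < 1) :
    ∃ (C r : ℝ), 0 < C ∧ 0 < r ∧ r < 1 ∧
      ∀ (k : ℕ) (i j : Fin M), |(P ^ k) i j| ≤ C * r ^ k := by
  haveI : NeZero M := ⟨hM.ne'⟩
  set Pc : Matrix (Fin M) (Fin M) ℂ := P.map (algebraMap ℝ ℂ) with hPc
  have hspec : ∀ z ∈ spectrum ℂ Pc, ‖z‖₊ < 1 := by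
    intro z hz
    have := hP z (charpoly_root_of_mem_spectrum Pc z hz)
    rw [← NNReal.coe_lt_coe]
    simpa using this
  have hρ : spectralRadius ℂ Pc < (1 : NNReal) :=
    spectrum.spectralRadius_lt_of_forall_lt Pc hspec
  obtain ⟨r, hρr, hr1⟩ := ENNReal.lt_iff_exists_nnreal_btwn.mp hρ
  have hr1' : (r : ℝ) < 1 := by exact_mod_cast hr1
  have hr0 : 0 < (r : ℝ) := by
    rcases (zero_le : (0 : ENNReal) ≤ (r : ENNReal)).lt_or_eq with h | h
    · exact_mod_cast h
    · exfalso; rw [← h] at hρr; exact (not_le.mpr hρr) zero_le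
  -- Gelfand
  have hgel := spectrum.pow_nnnorm_pow_one_div_tendsto_nhds_spectralRadius Pc
  have hev : ∀ᶠ k : ℕ in atTop, ((‖Pc ^ k‖₊ : ENNReal)) ^ (1 / (k : ℝ)) < (r : ENNReal) :=
    hgel.eventually_lt_const hρr
  obtain ⟨K, hK⟩ := (hev.and (eventually_ge_atTop 1)).exists_forall_of_atTop
  have hnorm : ∀ k ≥ K + 1, ‖Pc ^ k‖ ≤ (r : ℝ) ^ k := by
    intro k hk
    obtain ⟨h1, h2⟩ := hK k (le_trans (Nat.le_succ K) hk)
    have hk0 : (k : ℝ) ≠ 0 := Nat.cast_ne_zero.mpr (by omega)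
    have hx : (‖Pc ^ k‖₊ : ENNReal) = ((‖Pc ^ k‖₊ : ENNReal) ^ (1 / (k:ℝ))) ^ (k:ℝ) := by
      rw [← ENNReal.rpow_mul, one_div, inv_mul_cancel₀ hk0, ENNReal.rpow_one]
    have hlt : (‖Pc ^ k‖₊ : ENNReal) < ((r : ENNReal)) ^ (k : ℝ) := by
      rw [hx]
      exact ENNReal.rpow_lt_rpow h1 (by positivity)
    rw [ENNReal.rpow_natCast, ← ENNReal.coe_pow, ENNReal.coe_lt_coe] at hlt
    have := hlt.le
    rw [← NNReal.coe_le_coe] at this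
    simpa using this
  -- entries of P^k
  have hmap : ∀ k : ℕ, Pc ^ k = (P ^ k).map (algebraMap ℝ ℂ) := by
    intro k
    have : Pc = (algebraMap ℝ ℂ).mapMatrix P := rfl
    rw [this, ← map_pow]
    rfl
  have hentry : ∀ k ≥ K + 1, ∀ i j : Fin M, |(P ^ k) i j| ≤ (r : ℝ) ^ k := by
    intro k hk i j
    have h1 : |(P ^ k) i j| = ‖(Pc ^ k) i j‖ := by
      rw [hmap k]
      simp [Matrix.map_apply, Real.norm_eq_abs]
    rw [h1]
    exact le_trans (entry_le_linfty _ i j) (hnorm k hk)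
  set E : ℕ → ℝ := fun k => ∑ i, ∑ j, |(P ^ k) i j| with hE
  set C : ℝ := 1 + ∑ k ∈ Finset.range (K + 1), E k / (r : ℝ) ^ k with hC
  have hEnn : ∀ k, 0 ≤ E k / (r : ℝ) ^ k := by
    intro k
    apply div_nonneg _ (by positivity)
    apply Finset.sum_nonneg; intro i _
    apply Finset.sum_nonneg; intro j _
    exact abs_nonneg _
  have hC1 : 1 ≤ C := le_add_of_nonneg_right (Finset.sum_nonneg fun k _ => hEnn k)
  refine ⟨C, r, lt_of_lt_of_le one_pos hC1, hr0, hr1', ?_⟩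
  intro k i j
  rcases le_or_gt (K + 1) k with h | h
  · calc |(P ^ k) i j| ≤ (r : ℝ) ^ k := hentry k h i j
      _ ≤ C * (r : ℝ) ^ k := le_mul_of_one_le_left (by positivity) hC1
  · have h1 : |(P ^ k) i j| ≤ E k := by
      calc |(P ^ k) i j| ≤ ∑ j', |(P ^ k) i j'| :=
            Finset.single_le_sum (f := fun j' => |(P ^ k) i j'|)
              (fun _ _ => abs_nonneg _) (Finset.mem_univ j)
        _ ≤ E k := Finset.single_le_sum (f := fun i => ∑ j', |(P ^ k) i j'|)
              (fun i _ => Finset.sum_nonneg fun _ _ => abs_nonneg _) (Finset.mem_univ i)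
    have h2 : E k = (E k / (r : ℝ) ^ k) * (r : ℝ) ^ k := by
      field_simp
    have h3 : E k / (r : ℝ) ^ k ≤ C := by
      rw [hC]
      have : E k / (r : ℝ) ^ k ≤ ∑ k' ∈ Finset.range (K + 1), E k' / (r : ℝ) ^ k' :=
        Finset.single_le_sum (f := fun k' => E k' / (r : ℝ) ^ k') (fun k' _ => hEnn k')
          (Finset.mem_range.mpr h)
      linarith
    calc |(P ^ k) i j| ≤ (E k / (r : ℝ) ^ k) * (r : ℝ) ^ k := h2 ▸ h1
      _ ≤ C * (r : ℝ) ^ k := mul_le_mul_of_nonneg_right h3 (by positivity)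
lemma mulVec_norm_le' {m n' : ℕ} (A : Matrix (Fin m) (Fin n') ℝ) (v : Fin n' → ℝ) :
    ‖A.mulVec v‖ ≤ (∑ i, ∑ j, |A i j|) * ‖v‖ := by
  have hS : 0 ≤ ∑ i, ∑ j, |A i j| :=
    Finset.sum_nonneg fun i _ => Finset.sum_nonneg fun j _ => abs_nonneg _
  rw [pi_norm_le_iff_of_nonneg (mul_nonneg hS (norm_nonneg v))]
  intro i
  have h1 : ‖A.mulVec v i‖ = |∑ j, A i j * v j| := by
    rw [Real.norm_eq_abs]; congr 1
  rw [h1]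
  calc |∑ j, A i j * v j| ≤ ∑ j, |A i j * v j| := Finset.abs_sum_le_sum_abs _ _
    _ = ∑ j, |A i j| * |v j| := by simp [abs_mul]
    _ ≤ ∑ j, |A i j| * ‖v‖ := by
        refine Finset.sum_le_sum fun j _ => ?_
        refine mul_le_mul_of_nonneg_left ?_ (abs_nonneg _)
        have := norm_le_pi_norm v j
        rwa [Real.norm_eq_abs] at this
    _ = (∑ j, |A i j|) * ‖v‖ := (Finset.sum_mul _ _ _).symm
    _ ≤ (∑ i', ∑ j, |A i' j|) * ‖v‖ := by
        refine mul_le_mul_of_nonneg_right ?_ (norm_nonneg _)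
        exact Finset.single_le_sum (f := fun i' => ∑ j, |A i' j|)
          (fun i' _ => Finset.sum_nonneg fun j _ => abs_nonneg _) (Finset.mem_univ i)


lemma euclNorm_le_sqrt_mul {M : ℕ} (v : Fin M → ℝ) :
    euclNorm v ≤ Real.sqrt M * ‖v‖ := by
  have h1 : ∑ i, v i ^ 2 ≤ (M : ℝ) * ‖v‖ ^ 2 := by
    calc ∑ i, v i ^ 2 ≤ ∑ _i : Fin M, ‖v‖ ^ 2 := by
          refine Finset.sum_le_sum fun i _ => ?_
          have h := norm_le_pi_norm v i
          rw [Real.norm_eq_abs] at h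
          calc v i ^ 2 = |v i| ^ 2 := (sq_abs _).symm
            _ ≤ ‖v‖ ^ 2 := by
                exact pow_le_pow_left₀ (abs_nonneg _) h 2
      _ = (M : ℝ) * ‖v‖ ^ 2 := by simp [Finset.sum_const, mul_comm]
  calc euclNorm v ≤ Real.sqrt ((M : ℝ) * ‖v‖ ^ 2) := Real.sqrt_le_sqrt h1
    _ = Real.sqrt M * ‖v‖ := by
        rw [Real.sqrt_mul (Nat.cast_nonneg M), Real.sqrt_sq (norm_nonneg v)]


end AuxDiland

set_option maxHeartbeats 1000000 in
/-- Deterministic boundedness lemma for DILAND: if `ρ(P) < 1`, `P_t → P`,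
`B_t → B`, and `α(t) = a/(t+1)^δ` with `a > 0`, `0 < δ ≤ 1`, then the iterates
`x(t+1) = (1 - α(t))·x(t) + α(t)·(P_t·x(t) + B_t·u)` are bounded in the
Euclidean norm. -/
theorem diland_deterministic_bounded
    (M n : ℕ) (P : Matrix (Fin M) (Fin M) ℝ) (hP : SpecRadiusLtOne P)
    (B : Matrix (Fin M) (Fin n) ℝ) (u : Fin n → ℝ)
    (Pt : ℕ → Matrix (Fin M) (Fin M) ℝ) (Bt : ℕ → Matrix (Fin M) (Fin n) ℝ)
    (hPt : Tendsto Pt atTop (nhds P)) (hBt : Tendsto Bt atTop (nhds B))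
    (a δ : ℝ) (ha : 0 < a) (hδ0 : 0 < δ) (hδ1 : δ ≤ 1)
    (α : ℕ → ℝ) (hα : ∀ t : ℕ, α t = a / ((t : ℝ) + 1) ^ δ)
    (x : ℕ → Fin M → ℝ)
    (hrec : ∀ t : ℕ, x (t + 1) =
      (1 - α t) • x t + α t • ((Pt t).mulVec (x t) + (Bt t).mulVec u)) :
    ∃ C : ℝ, ∀ t : ℕ, euclNorm (x t) ≤ C := by
  -- trivial case M = 0
  rcases Nat.eq_zero_or_pos M with hM0 | hM
  · subst hM0
    exact ⟨0, fun t => by simp [euclNorm]⟩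
  -- positivity of α
  have hαpos : ∀ t, 0 < α t := by
    intro t
    rw [hα t]
    exact div_pos ha (Real.rpow_pos_of_pos (by positivity) δ)
  -- geometric decay of powers of P
  obtain ⟨C, r, hC0, hr0, hr1, hgeom⟩ := aux_geom hM P hP
  set s : ℝ := (r + 1) / 2 with hs_def
  have hrs : r < s := by rw [hs_def]; linarith
  have hs1 : s < 1 := by rw [hs_def]; linarith
  have hs0 : 0 < s := lt_trans hr0 hrs
  set Cq : ℝ := (M : ℝ) ^ 2 * C with hCq_def
  have hCq0 : 0 < Cq := by positivity
  have hPk : ∀ (k : ℕ) (v : Fin M → ℝ), ‖(P ^ k).mulVec v‖ ≤ Cq * r ^ k * ‖v‖ := by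
    intro k v
    refine le_trans (mulVec_norm_le' _ v) ?_
    refine mul_le_mul_of_nonneg_right ?_ (norm_nonneg v)
    calc ∑ i, ∑ j, |(P ^ k) i j| ≤ ∑ _i : Fin M, ∑ _j : Fin M, C * r ^ k :=
          Finset.sum_le_sum fun i _ => Finset.sum_le_sum fun j _ => hgeom k i j
      _ = Cq * r ^ k := by
          simp [Finset.sum_const, hCq_def]; ring
  -- summability
  have hq1 : r / s < 1 := (div_lt_one hs0).mpr hrs
  have hq0 : 0 ≤ r / s := le_of_lt (div_pos hr0 hs0)
  have hsum : ∀ v : Fin M → ℝ,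
      Summable (fun k : ℕ => ‖(P ^ k).mulVec v‖ / s ^ k) := by
    intro v
    refine Summable.of_nonneg_of_le (fun k => by positivity)
      (fun k => ?_) (((summable_geometric_of_lt_one hq0 hq1).mul_left (Cq * ‖v‖)))
    have hrw : (Cq * ‖v‖) * (r / s) ^ k = (Cq * r ^ k * ‖v‖) / s ^ k := by
      rw [div_pow]; ring
    rw [hrw]
    gcongr
    exact hPk k v
  set ν : (Fin M → ℝ) → ℝ := fun v => ∑' k : ℕ, ‖(P ^ k).mulVec v‖ / s ^ k with hν_def
  have hν0 : ∀ v, 0 ≤ ν v := fun v => tsum_nonneg fun k => by positivity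
  have hνnorm : ∀ v, ‖v‖ ≤ ν v := by
    intro v
    have h0 : ‖(P ^ 0).mulVec v‖ / s ^ 0 = ‖v‖ := by
      simp [Matrix.one_mulVec]
    calc ‖v‖ = ‖(P ^ 0).mulVec v‖ / s ^ 0 := h0.symm
      _ ≤ ν v := Summable.le_tsum (hsum v) 0 fun k _ => by positivity
  set Kν : ℝ := max (Cq * (1 - r / s)⁻¹) 1 with hKν_def
  have hKν1 : 1 ≤ Kν := le_max_right _ _
  have hKν0 : 0 < Kν := lt_of_lt_of_le one_pos hKν1
  have hνle : ∀ v, ν v ≤ Kν * ‖v‖ := by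
    intro v
    have h1 : ν v ≤ ∑' k : ℕ, (Cq * ‖v‖) * (r / s) ^ k := by
      refine Summable.tsum_le_tsum (fun k => ?_) (hsum v)
        ((summable_geometric_of_lt_one hq0 hq1).mul_left (Cq * ‖v‖))
      have hrw : (Cq * ‖v‖) * (r / s) ^ k = (Cq * r ^ k * ‖v‖) / s ^ k := by
        rw [div_pow]; ring
      rw [hrw]
      gcongr
      exact hPk k v
    rw [tsum_mul_left, tsum_geometric_of_lt_one hq0 hq1] at h1
    calc ν v ≤ Cq * ‖v‖ * (1 - r / s)⁻¹ := h1
      _ = (Cq * (1 - r / s)⁻¹) * ‖v‖ := by ring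
      _ ≤ Kν * ‖v‖ := mul_le_mul_of_nonneg_right (le_max_left _ _) (norm_nonneg _)
  have hνadd : ∀ v w, ν (v + w) ≤ ν v + ν w := by
    intro v w
    have h1 : ∀ k : ℕ, ‖(P ^ k).mulVec (v + w)‖ / s ^ k ≤
        ‖(P ^ k).mulVec v‖ / s ^ k + ‖(P ^ k).mulVec w‖ / s ^ k := by
      intro k
      rw [← add_div, div_le_div_iff_of_pos_right (by positivity),
        Matrix.mulVec_add]
      exact norm_add_le _ _
    calc ν (v + w) ≤ ∑' k : ℕ, (‖(P ^ k).mulVec v‖ / s ^ k + ‖(P ^ k).mulVec w‖ / s ^ k) :=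
          Summable.tsum_le_tsum h1 (hsum _) ((hsum v).add (hsum w))
      _ = ν v + ν w := Summable.tsum_add (hsum v) (hsum w)
  have hνsmul : ∀ (c : ℝ) v, ν (c • v) = |c| * ν v := by
    intro c v
    have h1 : ∀ k : ℕ, ‖(P ^ k).mulVec (c • v)‖ / s ^ k =
        |c| * (‖(P ^ k).mulVec v‖ / s ^ k) := by
      intro k
      rw [Matrix.mulVec_smul, norm_smul, Real.norm_eq_abs, mul_div_assoc]
    simp only [hν_def, h1]
    exact tsum_mul_left
  have hνP : ∀ v, ν (P.mulVec v) ≤ s * ν v := by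
    intro v
    have h1 : ∀ k : ℕ, ‖(P ^ k).mulVec (P.mulVec v)‖ / s ^ k =
        s * (‖(P ^ (k + 1)).mulVec v‖ / s ^ (k + 1)) := by
      intro k
      rw [Matrix.mulVec_mulVec, ← pow_succ]
      rw [pow_succ]
      field_simp
      ring
    have h2 : ν (P.mulVec v) = s * ∑' k : ℕ, ‖(P ^ (k + 1)).mulVec v‖ / s ^ (k + 1) := by
      simp only [hν_def, h1]
      exact tsum_mul_left
    have h3 : ν v = ‖(P ^ 0).mulVec v‖ / s ^ 0 +
        ∑' k : ℕ, ‖(P ^ (k + 1)).mulVec v‖ / s ^ (k + 1) := Summable.tsum_eq_zero_add (hsum v)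
    have h5 : 0 ≤ ‖(P ^ 0).mulVec v‖ / s ^ 0 := by positivity
    have h4 : ∑' k : ℕ, ‖(P ^ (k + 1)).mulVec v‖ / s ^ (k + 1) ≤ ν v := by linarith
    rw [h2]
    exact mul_le_mul_of_nonneg_left h4 (le_of_lt hs0)
  -- convergence of P_t entries
  have hent : ∀ i j : Fin M, Tendsto (fun t => Pt t i j) atTop (nhds (P i j)) := by
    intro i j
    exact ((continuous_id.matrix_elem i j).tendsto P).comp hPt
  have hSP : Tendsto (fun t => ∑ i, ∑ j, |Pt t i j - P i j|) atTop (nhds 0) := by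
    have h1 : ∀ i j : Fin M, Tendsto (fun t => |Pt t i j - P i j|) atTop (nhds 0) := by
      intro i j
      have h2 := ((hent i j).sub (tendsto_const_nhds (x := P i j))).abs
      simpa using h2
    have h3 : Tendsto (fun t => ∑ i, ∑ j, |Pt t i j - P i j|) atTop
        (nhds (∑ i : Fin M, ∑ j : Fin M, (0 : ℝ))) :=
      tendsto_finset_sum _ fun i _ => tendsto_finset_sum _ fun j _ => h1 i j
    simpa using h3
  -- convergence of B_t u
  have hBu : Tendsto (fun t => ‖(Bt t).mulVec u‖) atTop (nhds ‖B.mulVec u‖) := by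
    have h1 : Tendsto (fun t => (Bt t).mulVec u) atTop (nhds (B.mulVec u)) := by
      rw [tendsto_pi_nhds]
      intro i
      have h2 : ∀ t, (Bt t).mulVec u i = ∑ j, Bt t i j * u j := fun t => rfl
      have h3 : B.mulVec u i = ∑ j, B i j * u j := rfl
      simp only [h2, h3]
      exact tendsto_finset_sum _ fun j _ =>
        (((continuous_id.matrix_elem i j).tendsto B).comp hBt).mul tendsto_const_nhds
    exact (continuous_norm.tendsto _).comp h1
  -- α tends to 0
  have hα0 : Tendsto α atTop (nhds 0) := by
    have h1 : Tendsto (fun t : ℕ => ((t : ℝ) + 1)) atTop atTop :=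
      tendsto_atTop_add_const_right _ 1 tendsto_natCast_atTop_atTop
    have h2 : Tendsto (fun t : ℕ => ((t : ℝ) + 1) ^ δ) atTop atTop :=
      (tendsto_rpow_atTop hδ0).comp h1
    have h3 : Tendsto (fun t : ℕ => a / ((t : ℝ) + 1) ^ δ) atTop (nhds 0) :=
      Tendsto.div_atTop tendsto_const_nhds h2
    have h4 : α = fun t : ℕ => a / ((t : ℝ) + 1) ^ δ := funext hα
    rw [h4]
    exact h3
  -- choose threshold
  set s' : ℝ := (1 + s) / 2 with hs'_def
  have hss' : s < s' := by rw [hs'_def]; linarith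
  have hs'1 : s' < 1 := by rw [hs'_def]; linarith
  have h1s' : 0 < 1 - s' := by linarith
  set ε : ℝ := (1 - s) / (2 * Kν) with hε_def
  have hε0 : 0 < ε := by
    rw [hε_def]
    exact div_pos (by linarith) (by positivity)
  have Ev1 : ∀ᶠ t : ℕ in atTop, α t < 1 := hα0.eventually_lt_const one_pos
  have Ev2 : ∀ᶠ t : ℕ in atTop, ∑ i, ∑ j, |Pt t i j - P i j| < ε :=
    hSP.eventually_lt_const hε0
  have Ev3 : ∀ᶠ t : ℕ in atTop, ‖(Bt t).mulVec u‖ < ‖B.mulVec u‖ + 1 :=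
    hBu.eventually_lt_const (lt_add_one _)
  obtain ⟨t₁, ht₁⟩ := ((Ev1.and Ev2).and Ev3).exists_forall_of_atTop
  set D : ℝ := Kν * (‖B.mulVec u‖ + 1) with hD_def
  have hD0 : 0 < D := by positivity
  set K : ℝ := D / (1 - s') with hK_def
  have hK0 : 0 < K := by positivity
  -- one-step estimate
  have hstep : ∀ t ≥ t₁, ν (x (t + 1)) ≤ max (ν (x t)) K := by
    intro t ht
    obtain ⟨⟨hα1, hPtε⟩, hBtD⟩ := ht₁ t ht
    have hα1' : 0 ≤ 1 - α t := by linarith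
    have hαt := hαpos t
    -- bound ν of the update direction
    have hy : ν ((Pt t).mulVec (x t) + (Bt t).mulVec u) ≤ s' * ν (x t) + D := by
      have hyP : ν ((Pt t).mulVec (x t)) ≤ s' * ν (x t) := by
        have hsplit : (Pt t).mulVec (x t) = P.mulVec (x t) + (Pt t - P).mulVec (x t) := by
          rw [Matrix.sub_mulVec]
          abel
        have h2 : ν ((Pt t - P).mulVec (x t)) ≤ ((1 - s) / 2) * ν (x t) := by
          calc ν ((Pt t - P).mulVec (x t)) ≤ Kν * ‖(Pt t - P).mulVec (x t)‖ := hνle _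
            _ ≤ Kν * ((∑ i, ∑ j, |(Pt t - P) i j|) * ‖x t‖) :=
                mul_le_mul_of_nonneg_left (mulVec_norm_le' _ _) (le_of_lt hKν0)
            _ ≤ Kν * (ε * ‖x t‖) := by
                refine mul_le_mul_of_nonneg_left ?_ (le_of_lt hKν0)
                refine mul_le_mul_of_nonneg_right ?_ (norm_nonneg _)
                refine le_of_lt (lt_of_le_of_lt (le_of_eq ?_) hPtε)
                congr 1
            _ = ((1 - s) / 2) * ‖x t‖ := by
                rw [hε_def]; field_simp
            _ ≤ ((1 - s) / 2) * ν (x t) :=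
                mul_le_mul_of_nonneg_left (hνnorm _) (by linarith)
        calc ν ((Pt t).mulVec (x t)) ≤ ν (P.mulVec (x t)) + ν ((Pt t - P).mulVec (x t)) := by
              rw [hsplit]; exact hνadd _ _
          _ ≤ s * ν (x t) + ((1 - s) / 2) * ν (x t) := add_le_add (hνP _) h2
          _ = s' * ν (x t) := by rw [hs'_def]; ring
      have hyB : ν ((Bt t).mulVec u) ≤ D := by
        calc ν ((Bt t).mulVec u) ≤ Kν * ‖(Bt t).mulVec u‖ := hνle _
          _ ≤ Kν * (‖B.mulVec u‖ + 1) :=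
              mul_le_mul_of_nonneg_left (le_of_lt hBtD) (le_of_lt hKν0)
          _ = D := rfl
      calc ν ((Pt t).mulVec (x t) + (Bt t).mulVec u)
          ≤ ν ((Pt t).mulVec (x t)) + ν ((Bt t).mulVec u) := hνadd _ _
        _ ≤ s' * ν (x t) + D := add_le_add hyP hyB
    -- combine
    have hcomb : ν (x (t + 1)) ≤ (1 - α t) * ν (x t) + α t * (s' * ν (x t) + D) := by
      rw [hrec t]
      calc ν ((1 - α t) • x t + α t • ((Pt t).mulVec (x t) + (Bt t).mulVec u))
          ≤ ν ((1 - α t) • x t) + ν (α t • ((Pt t).mulVec (x t) + (Bt t).mulVec u)) :=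
            hνadd _ _
        _ = (1 - α t) * ν (x t) +
              α t * ν ((Pt t).mulVec (x t) + (Bt t).mulVec u) := by
            rw [hνsmul, hνsmul, abs_of_nonneg hα1', abs_of_pos hαt]
        _ ≤ (1 - α t) * ν (x t) + α t * (s' * ν (x t) + D) := by
            exact add_le_add le_rfl (mul_le_mul_of_nonneg_left hy (le_of_lt hαt))
    set m : ℝ := max (ν (x t)) K with hm_def
    have hm1 : ν (x t) ≤ m := le_max_left _ _
    have hm2 : K ≤ m := le_max_right _ _
    have hs'0 : 0 < s' := by rw [hs'_def]; linarith
    have hβ1 : α t * (1 - s') ≤ 1 :=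
      mul_le_one₀ hα1.le (by linarith) (by linarith)
    have hβ0 : 0 ≤ α t * (1 - s') := mul_nonneg hαt.le h1s'.le
    have hDm : D = (1 - s') * K := by rw [hK_def]; field_simp
    calc ν (x (t + 1)) ≤ (1 - α t) * ν (x t) + α t * (s' * ν (x t) + D) := hcomb
      _ = (1 - α t * (1 - s')) * ν (x t) + (α t * (1 - s')) * K := by
          rw [hDm]; ring
      _ ≤ (1 - α t * (1 - s')) * m + (α t * (1 - s')) * m := by
          refine add_le_add ?_ ?_
          · exact mul_le_mul_of_nonneg_left hm1 (by linarith)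
          · exact mul_le_mul_of_nonneg_left hm2 hβ0
      _ = m := by ring
  -- induction from t₁
  have hind : ∀ k : ℕ, ν (x (t₁ + k)) ≤ max (ν (x t₁)) K := by
    intro k
    induction k with
    | zero => exact le_max_left _ _
    | succ k ih =>
        have h1 : ν (x (t₁ + k + 1)) ≤ max (ν (x (t₁ + k))) K :=
          hstep (t₁ + k) (Nat.le_add_right _ _)
        have h2 : max (ν (x (t₁ + k))) K ≤ max (max (ν (x t₁)) K) K :=
          max_le_max ih le_rfl
        have h3 : max (max (ν (x t₁)) K) K = max (ν (x t₁)) K := by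
          rw [max_assoc, max_self]
        calc ν (x (t₁ + (k + 1))) = ν (x (t₁ + k + 1)) := by ring_nf
          _ ≤ max (ν (x t₁)) K := by rw [← h3]; exact le_trans h1 h2
  -- assemble the final bound
  set C₁ : ℝ := Real.sqrt M * max (ν (x t₁)) K with hC₁_def
  set C₂ : ℝ := (Finset.range (t₁ + 1)).sup' (by simp) (fun t => euclNorm (x t)) with hC₂_def
  refine ⟨max C₁ C₂, fun t => ?_⟩
  rcases le_or_gt t t₁ with h | h
  · refine le_trans ?_ (le_max_right C₁ C₂)
    exact Finset.le_sup' (fun t => euclNorm (x t)) (Finset.mem_range.mpr (by omega))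
  · refine le_trans ?_ (le_max_left C₁ C₂)
    have h1 : t = t₁ + (t - t₁) := by omega
    have h2 : ν (x t) ≤ max (ν (x t₁)) K := by
      rw [h1]; exact hind (t - t₁)
    calc euclNorm (x t) ≤ Real.sqrt M * ‖x t‖ := euclNorm_le_sqrt_mul _
      _ ≤ Real.sqrt M * ν (x t) :=
          mul_le_mul_of_nonneg_left (le_trans (hνnorm _) (le_refl _))
            (Real.sqrt_nonneg _)
      _ ≤ C₁ := mul_le_mul_of_nonneg_left h2 (Real.sqrt_nonneg _)
end

section
/- Let P be an M×M real matrix such that every eigenvalue of P, viewed as a matrix over ℂ, has modulus strictly less than 1, let B be an M×n real matrix, and let u ∈ ℝⁿ. Let (P_t)_{t≥0} and (B_t)_{t≥0} be sequences of M×M and M×n real matrices, respectively, converging entrywise to P and B. Let α(t) = a/(t+1)^δ with a > 0 and 0 < δ ≤ 1. Then for any initial x(0) ∈ ℝ^M, the sequence defined by x(t+1) = (1 − α(t))·x(t) + α(t)·(P_t·x(t) + B_t·u) converges as t → ∞ to (I − P)^{-1}·B·u. -/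
open Filter

open Finset Matrix in
private lemma diland_scalar_rec_tendsto_zero (T0 : ℕ) (y β g : ℕ → ℝ)
    (hy : ∀ t, 0 ≤ y t) (hβ0 : ∀ t, 0 ≤ β t) (hβ1 : ∀ t, T0 ≤ t → β t ≤ 1)
    (hdiv : Tendsto (fun T => ∑ t ∈ Finset.range T, β t) atTop atTop)
    (hg : Tendsto g atTop (nhds 0))
    (hrec : ∀ t, T0 ≤ t → y (t+1) ≤ (1 - β t) * y t + β t * g t) :
    Tendsto y atTop (nhds 0) := by
  rw [NormedAddCommGroup.tendsto_nhds_zero]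
  intro ε hε
  have hε2 : 0 < ε / 2 := by linarith
  obtain ⟨T', hT'⟩ : ∃ T', ∀ t ≥ T', |g t| < ε / 2 := by
    have := (NormedAddCommGroup.tendsto_nhds_zero.mp hg) (ε/2) hε2
    simpa [Real.norm_eq_abs, eventually_atTop] using this
  set T := max T' T0 with hTdef
  have hT : ∀ t ≥ T, |g t| < ε / 2 := fun t ht => hT' t (le_trans (le_max_left _ _) ht)
  have hTT0 : ∀ t, T ≤ t → T0 ≤ t := fun t ht => le_trans (le_max_right _ _) ht
  set z : ℕ → ℝ := fun t => max (y t - ε/2) 0 with hz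
  have hz0 : ∀ t, 0 ≤ z t := fun t => le_max_right _ _
  have hβ1' : ∀ t, T0 ≤ t → 0 ≤ 1 - β t := fun t ht => by linarith [hβ1 t ht]
  have key : ∀ t, T ≤ t → z (t+1) ≤ (1 - β t) * z t := by
    intro t ht
    have hgt : g t ≤ ε/2 := le_of_lt (lt_of_le_of_lt (le_abs_self _) (hT t ht))
    have h1 : y (t+1) - ε/2 ≤ (1 - β t) * (y t - ε/2) := by
      have := hrec t (hTT0 t ht)
      have hb : β t * g t ≤ β t * (ε/2) := mul_le_mul_of_nonneg_left hgt (hβ0 t)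
      nlinarith
    refine max_le ?_ (mul_nonneg (hβ1' t (hTT0 t ht)) (hz0 t))
    exact h1.trans (mul_le_mul_of_nonneg_left (le_max_left _ _) (hβ1' t (hTT0 t ht)))
  have prodb : ∀ s, z (T + s) ≤ (∏ i ∈ range s, (1 - β (T + i))) * z T := by
    intro s
    induction s with
    | zero => simp
    | succ s ih =>
      have h1 : z (T + (s+1)) ≤ (1 - β (T + s)) * z (T + s) := by
        have h := key (T + s) (Nat.le_add_right _ _)
        rw [← Nat.add_assoc]
        exact h
      calc z (T + (s+1)) ≤ (1 - β (T + s)) * z (T + s) := h1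
        _ ≤ (1 - β (T + s)) * ((∏ i ∈ range s, (1 - β (T + i))) * z T) :=
            mul_le_mul_of_nonneg_left ih (hβ1' _ (hTT0 _ (Nat.le_add_right _ _)))
        _ = (∏ i ∈ range (s+1), (1 - β (T + i))) * z T := by
            rw [prod_range_succ]; ring
  have hprod0 : Tendsto (fun s => (∏ i ∈ range s, (1 - β (T + i)))) atTop (nhds 0) := by
    have hub : ∀ s, (∏ i ∈ range s, (1 - β (T + i))) ≤ Real.exp (-(∑ i ∈ range s, β (T + i))) := by
      intro s
      have : Real.exp (-(∑ i ∈ range s, β (T + i))) = ∏ i ∈ range s, Real.exp (-(β (T+i))) := by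
        rw [← Real.exp_sum, ← Finset.sum_neg_distrib]
      rw [this]
      refine Finset.prod_le_prod (fun i _ => hβ1' _ (hTT0 _ (Nat.le_add_right _ _))) (fun i _ => ?_)
      have := Real.add_one_le_exp (-(β (T + i)))
      linarith
    have hlb : ∀ s, 0 ≤ (∏ i ∈ range s, (1 - β (T + i))) :=
      fun s => Finset.prod_nonneg fun i _ => hβ1' _ (hTT0 _ (Nat.le_add_right _ _))
    have hsum : Tendsto (fun s => ∑ i ∈ range s, β (T + i)) atTop atTop := by
      have heq : ∀ s, ∑ i ∈ range s, β (T + i)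
          = (∑ t ∈ range (T + s), β t) - ∑ t ∈ range T, β t := by
        intro s
        rw [Finset.sum_range_add]
        ring
      simp only [heq]
      apply tendsto_atTop_add_const_right
      exact hdiv.comp (tendsto_atTop_atTop.mpr (fun b => ⟨b, fun n hn => le_trans hn (Nat.le_add_left n T)⟩))
    have hexp : Tendsto (fun s => Real.exp (-(∑ i ∈ range s, β (T + i)))) atTop (nhds 0) :=
      Real.tendsto_exp_atBot.comp (tendsto_neg_atBot_iff.mpr hsum)
    exact squeeze_zero hlb hub hexp
  have hzT : Tendsto (fun s => z (T + s)) atTop (nhds 0) := by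
    have := hprod0.mul_const (z T)
    rw [zero_mul] at this
    exact squeeze_zero (fun s => hz0 _) prodb this
  have hz0' : Tendsto z atTop (nhds 0) := by
    rw [← tendsto_add_atTop_iff_nat T]
    simpa [add_comm] using hzT
  have : ∀ᶠ t in atTop, z t < ε/2 := by
    have := (NormedAddCommGroup.tendsto_nhds_zero.mp hz0') (ε/2) hε2
    filter_upwards [this] with t ht
    calc z t ≤ |z t| := le_abs_self _
      _ < ε/2 := by simpa [Real.norm_eq_abs] using ht
  filter_upwards [this] with t ht
  have : y t ≤ z t + ε/2 := by
    have := le_max_left (y t - ε/2) 0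
    linarith
  rw [Real.norm_eq_abs, abs_of_nonneg (hy t)]
  linarith

open Finset Matrix in
private lemma diland_mulVec_norm_le {m n' : ℕ} (A : Matrix (Fin m) (Fin n') ℝ) (v : Fin n' → ℝ) :
    ‖A *ᵥ v‖ ≤ (∑ i, ∑ j, |A i j|) * ‖v‖ := by
  have hC : (0:ℝ) ≤ ∑ i, ∑ j, |A i j| :=
    Finset.sum_nonneg fun i _ => Finset.sum_nonneg fun j _ => abs_nonneg _
  rw [pi_norm_le_iff_of_nonneg (by positivity)]
  intro i
  have h1 : ‖(A *ᵥ v) i‖ ≤ ∑ j, |A i j * v j| := by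
    rw [Real.norm_eq_abs, Matrix.mulVec, dotProduct]
    exact Finset.abs_sum_le_sum_abs _ _
  have h2 : ∑ j, |A i j * v j| ≤ (∑ j, |A i j|) * ‖v‖ := by
    rw [Finset.sum_mul]
    refine Finset.sum_le_sum fun j _ => ?_
    rw [abs_mul]
    refine mul_le_mul_of_nonneg_left ?_ (abs_nonneg _)
    simpa [Real.norm_eq_abs] using norm_le_pi_norm v j
  have h3 : (∑ j, |A i j|) * ‖v‖ ≤ (∑ i, ∑ j, |A i j|) * ‖v‖ := by
    refine mul_le_mul_of_nonneg_right ?_ (norm_nonneg v)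
    exact Finset.single_le_sum (f := fun i => ∑ j, |A i j|)
      (fun i _ => Finset.sum_nonneg fun j _ => abs_nonneg _) (Finset.mem_univ i)
  linarith

open Finset Matrix in
private lemma diland_tendsto_mulVec {m n' : ℕ} (At : ℕ → Matrix (Fin m) (Fin n') ℝ)
    (A : Matrix (Fin m) (Fin n') ℝ) (hA : Tendsto At atTop (nhds A)) (v : Fin n' → ℝ) :
    Tendsto (fun t => At t *ᵥ v) atTop (nhds (A *ᵥ v)) := by
  have hent : ∀ i j, Tendsto (fun t => At t i j) atTop (nhds (A i j)) := by
    intro i j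
    exact tendsto_pi_nhds.mp (tendsto_pi_nhds.mp hA i) j
  rw [tendsto_pi_nhds]
  intro i
  simp only [Matrix.mulVec, dotProduct]
  exact tendsto_finset_sum _ (fun j _ => (hent i j).mul_const _)

section spectral
open Finset Matrix
attribute [local instance] Matrix.linftyOpNormedRing Matrix.linftyOpNormedAlgebra

variable {M : ℕ}

private lemma diland_eval_charpoly_complex (Q : Matrix (Fin M) (Fin M) ℂ) (z : ℂ) :
    Q.charpoly.eval z = (Matrix.scalar (Fin M) z - Q).det := by
  rw [Matrix.charpoly, ← Polynomial.coe_evalRingHom, RingHom.map_det]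
  congr 1
  ext i j
  by_cases h : i = j
  · subst h; simp [Matrix.charmatrix_apply_eq]
  · simp [Matrix.charmatrix_apply_ne _ _ _ h, Matrix.scalar_apply, Matrix.diagonal_apply_ne _ h, h]

private lemma diland_spec_radius_lt_one (P : Matrix (Fin M) (Fin M) ℝ) (hP : SpecRadiusLtOne P) :
    spectralRadius ℂ (P.map (algebraMap ℝ ℂ)) < 1 := by
  set Q := P.map (algebraMap ℝ ℂ) with hQ
  have hspec : ∀ z ∈ spectrum ℂ Q, ‖z‖₊ < 1 := by
    intro z hz
    rw [spectrum.mem_iff] at hz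
    have hdet : (Matrix.scalar (Fin M) z - Q).det = 0 := by
      by_contra h
      exact hz ((Matrix.isUnit_iff_isUnit_det _).mpr (isUnit_iff_ne_zero.mpr h))
    have hroot : Q.charpoly.IsRoot z := by
      rw [Polynomial.IsRoot, diland_eval_charpoly_complex, hdet]
    have := hP z hroot
    simpa [← NNReal.coe_lt_coe, coe_nnnorm] using this
  rcases Set.eq_empty_or_nonempty (spectrum ℂ Q) with h | h
  · rw [spectralRadius]
    simp [h]
  · exact spectrum.spectralRadius_lt_of_forall_lt_of_nonempty h
      (by exact_mod_cast hspec)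

private lemma diland_exists_pow_mulVec_half (P : Matrix (Fin M) (Fin M) ℝ)
    (hP : SpecRadiusLtOne P) :
    ∃ k : ℕ, 0 < k ∧ ∀ v : Fin M → ℝ, ‖(P ^ k) *ᵥ v‖ ≤ (1/2) * ‖v‖ := by
  set Q := P.map (algebraMap ℝ ℂ) with hQdef
  have hρ := diland_spec_radius_lt_one P hP
  obtain ⟨c, hc1, hc2⟩ := exists_between hρ
  have hgel := spectrum.pow_nnnorm_pow_one_div_tendsto_nhds_spectralRadius Q
  have h1 : ∀ᶠ k : ℕ in atTop, (‖Q ^ k‖₊ : ENNReal) ^ (1/(k:ℝ)) < c :=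
    hgel.eventually_lt_const hc1
  set ε : ℝ := 1 / (2 * (M : ℝ) + 2) with hεdef
  have hεpos : 0 < ε := by positivity
  have h2 : ∀ᶠ k : ℕ in atTop, c ^ k < ENNReal.ofReal ε := by
    have := ENNReal.tendsto_pow_atTop_nhds_zero_of_lt_one hc2
    exact this.eventually_lt_const (by simp [hεpos])
  obtain ⟨k, ⟨hk1, hk2⟩, hk3⟩ := ((h1.and h2).and (eventually_ge_atTop 1)).exists
  refine ⟨k, hk3, ?_⟩
  have hk0 : (k : ℝ) ≠ 0 := Nat.cast_ne_zero.mpr (by omega)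
  have hQk : (‖Q ^ k‖₊ : ENNReal) < ENNReal.ofReal ε := by
    calc (‖Q ^ k‖₊ : ENNReal) = ((‖Q ^ k‖₊ : ENNReal) ^ (1/(k:ℝ))) ^ k := by
          rw [← ENNReal.rpow_natCast _ k, ← ENNReal.rpow_mul, one_div,
            inv_mul_cancel₀ hk0, ENNReal.rpow_one]
      _ < c ^ k := (ENNReal.pow_lt_pow_left_iff (by omega)).mpr hk1
      _ < ENNReal.ofReal ε := hk2
  have hnorm : ‖Q ^ k‖ < ε := by
    rw [ENNReal.ofReal, ENNReal.coe_lt_coe] at hQk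
    have := NNReal.coe_lt_coe.mpr hQk
    rwa [coe_nnnorm, Real.coe_toNNReal _ hεpos.le] at this
  have hpow : Q ^ k = (P ^ k).map (algebraMap ℝ ℂ) := by
    rw [hQdef, ← RingHom.mapMatrix_apply, ← map_pow, RingHom.mapMatrix_apply]
  have hentry : ∀ i j, |(P ^ k) i j| < ε := by
    intro i j
    have h1 : ‖(Q ^ k) i j‖₊ ≤ ‖Q ^ k‖₊ := by
      rw [Matrix.linfty_opNNNorm_def]
      exact le_trans
        (Finset.single_le_sum (f := fun j' => ‖(Q ^ k) i j'‖₊) (fun j' _ => zero_le)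
          (Finset.mem_univ j))
        (Finset.le_sup (f := fun i' => ∑ j' : Fin M, ‖(Q ^ k) i' j'‖₊) (Finset.mem_univ i))
    have h2 : ‖(Q ^ k) i j‖ ≤ ‖Q ^ k‖ := h1
    have h3 : (Q ^ k) i j = ((P ^ k) i j : ℂ) := by rw [hpow]; rfl
    rw [h3, Complex.norm_real, Real.norm_eq_abs] at h2
    exact lt_of_le_of_lt h2 hnorm
  intro v
  have hv0 : (0:ℝ) ≤ 1/2 * ‖v‖ := by positivity
  rw [pi_norm_le_iff_of_nonneg hv0]
  intro i
  have hb : ∀ j, |(P ^ k) i j * v j| ≤ ε * ‖v‖ := by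
    intro j
    rw [abs_mul]
    have h1 : |v j| ≤ ‖v‖ := by
      have := norm_le_pi_norm v j
      simpa [Real.norm_eq_abs] using this
    exact mul_le_mul (hentry i j).le h1 (abs_nonneg _) hεpos.le
  have h2 : ‖(P ^ k *ᵥ v) i‖ ≤ ∑ j : Fin M, |(P ^ k) i j * v j| := by
    rw [Real.norm_eq_abs, Matrix.mulVec, dotProduct]
    exact Finset.abs_sum_le_sum_abs _ _
  have h3 : ∑ j : Fin M, |(P ^ k) i j * v j| ≤ (M : ℝ) * (ε * ‖v‖) := by
    calc ∑ j : Fin M, |(P ^ k) i j * v j| ≤ ∑ _j : Fin M, ε * ‖v‖ :=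
          Finset.sum_le_sum (fun j _ => hb j)
      _ = (M : ℝ) * (ε * ‖v‖) := by simp [mul_comm]
  have h4 : (M : ℝ) * (ε * ‖v‖) ≤ 1/2 * ‖v‖ := by
    have hM : (M : ℝ) * ε ≤ 1/2 := by
      rw [hεdef, mul_one_div, div_le_div_iff₀ (by positivity) (by norm_num : (0:ℝ) < 2)]
      nlinarith [Nat.cast_nonneg (α := ℝ) M]
    have := mul_le_mul_of_nonneg_right hM (norm_nonneg v)
    nlinarith [norm_nonneg v]
  linarith

end spectral

/-- Deterministic (per sample path) DILAND convergence: if `ρ(P) < 1`,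
`P_t → P`, `B_t → B`, and `α(t) = a/(t+1)^δ` with `a > 0`, `0 < δ ≤ 1`, then the
iterates `x(t+1) = (1 - α(t))·x(t) + α(t)·(P_t·x(t) + B_t·u)` converge to
`(I - P)⁻¹·B·u`. -/
theorem diland_deterministic_convergence
    (M n : ℕ) (P : Matrix (Fin M) (Fin M) ℝ) (hP : SpecRadiusLtOne P)
    (B : Matrix (Fin M) (Fin n) ℝ) (u : Fin n → ℝ)
    (Pt : ℕ → Matrix (Fin M) (Fin M) ℝ) (Bt : ℕ → Matrix (Fin M) (Fin n) ℝ)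
    (hPt : Tendsto Pt atTop (nhds P)) (hBt : Tendsto Bt atTop (nhds B))
    (a δ : ℝ) (ha : 0 < a) (hδ0 : 0 < δ) (hδ1 : δ ≤ 1)
    (α : ℕ → ℝ) (hα : ∀ t : ℕ, α t = a / ((t : ℝ) + 1) ^ δ)
    (x : ℕ → Fin M → ℝ)
    (hrec : ∀ t : ℕ, x (t + 1) =
      (1 - α t) • x t + α t • ((Pt t).mulVec (x t) + (Bt t).mulVec u)) :
    Tendsto x atTop (nhds ((1 - P)⁻¹.mulVec (B.mulVec u))) := by
  classical
  open Finset Matrix in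
  -- the fixed point
  set Q := P.map (algebraMap ℝ ℂ) with hQdef
  have hdet : IsUnit (1 - P).det := by
    rw [isUnit_iff_ne_zero]
    intro hdet0
    have hroot : Q.charpoly.IsRoot 1 := by
      rw [Polynomial.IsRoot, diland_eval_charpoly_complex]
      have hsc : Matrix.scalar (Fin M) (1:ℂ) - Q = ((1 - P).map (algebraMap ℝ ℂ)) := by
        ext i j
        by_cases h : i = j
        · subst h
          simp [hQdef, Matrix.scalar_apply, Matrix.map_apply, Matrix.sub_apply, Matrix.one_apply]
        · simp [hQdef, Matrix.scalar_apply, Matrix.map_apply, Matrix.sub_apply,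
            Matrix.one_apply, h]
      rw [hsc, ← RingHom.mapMatrix_apply, ← RingHom.map_det, hdet0, map_zero]
    have := hP 1 hroot
    simp at this
  set xs : Fin M → ℝ := (1 - P)⁻¹ *ᵥ (B *ᵥ u) with hxs
  have hfix : P *ᵥ xs + B *ᵥ u = xs := by
    have h1 : (1 - P) *ᵥ xs = B *ᵥ u := by
      rw [hxs, Matrix.mulVec_mulVec, Matrix.mul_nonsing_inv _ hdet, Matrix.one_mulVec]
    have h2 : xs - P *ᵥ xs = B *ᵥ u := by
      rwa [Matrix.sub_mulVec, Matrix.one_mulVec] at h1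
    rw [← h2]; abel
  obtain ⟨k, hkpos, hhalf⟩ := diland_exists_pow_mulVec_half P hP
  -- the adapted norm
  set r : ℝ := (1/2 : ℝ) ^ ((1:ℝ)/(k:ℝ)) with hrdef
  have hk0 : (k : ℝ) ≠ 0 := Nat.cast_ne_zero.mpr (by omega)
  have hr0 : 0 < r := Real.rpow_pos_of_pos (by norm_num) _
  have hr1 : r < 1 := Real.rpow_lt_one (by norm_num) (by norm_num) (by positivity)
  have hrk : r ^ k = 1/2 := by
    rw [hrdef, ← Real.rpow_natCast _ k, ← Real.rpow_mul (by norm_num),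
      div_mul_cancel₀ 1 hk0, Real.rpow_one]
  set N : (Fin M → ℝ) → ℝ := fun v => ∑ j ∈ Finset.range k, r ^ (k - 1 - j) * ‖(P ^ j) *ᵥ v‖
    with hNdef
  have hN0 : ∀ v, 0 ≤ N v := fun v =>
    Finset.sum_nonneg fun j _ => mul_nonneg (pow_nonneg hr0.le _) (norm_nonneg _)
  have hNadd : ∀ v w, N (v + w) ≤ N v + N w := by
    intro v w
    rw [hNdef]
    simp only
    rw [← Finset.sum_add_distrib]
    refine Finset.sum_le_sum fun j _ => ?_
    rw [Matrix.mulVec_add, ← mul_add]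
    exact mul_le_mul_of_nonneg_left (norm_add_le _ _) (pow_nonneg hr0.le _)
  have hNsmul : ∀ (c : ℝ) v, N (c • v) = |c| * N v := by
    intro c v
    rw [hNdef]
    simp only [Matrix.mulVec_smul, norm_smul, Real.norm_eq_abs, Finset.mul_sum]
    exact Finset.sum_congr rfl fun j _ => by ring
  have hNlow : ∀ v, r ^ (k - 1) * ‖v‖ ≤ N v := by
    intro v
    have h0 : (0:ℕ) ∈ Finset.range k := Finset.mem_range.mpr hkpos
    have := Finset.single_le_sum (f := fun j => r ^ (k - 1 - j) * ‖(P ^ j) *ᵥ v‖)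
      (fun j _ => mul_nonneg (pow_nonneg hr0.le _) (norm_nonneg _)) h0
    simpa [Matrix.one_mulVec] using this
  set CN : ℝ := ∑ j ∈ Finset.range k, r ^ (k - 1 - j) * (∑ i, ∑ j', |(P ^ j) i j'|) with hCN
  have hCN0 : 0 ≤ CN := Finset.sum_nonneg fun j _ => mul_nonneg (pow_nonneg hr0.le _)
    (Finset.sum_nonneg fun i _ => Finset.sum_nonneg fun j' _ => abs_nonneg _)
  have hNup : ∀ v, N v ≤ CN * ‖v‖ := by
    intro v
    rw [hNdef, hCN]
    simp only
    rw [Finset.sum_mul]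
    refine Finset.sum_le_sum fun j _ => ?_
    rw [mul_assoc]
    exact mul_le_mul_of_nonneg_left (diland_mulVec_norm_le _ _) (pow_nonneg hr0.le _)
  have hNP : ∀ v, N (P *ᵥ v) ≤ r * N v := by
    intro v
    set f : ℕ → ℝ := fun j => ‖(P ^ j) *ᵥ v‖ with hf
    have h3 : N (P *ᵥ v) = ∑ j ∈ Finset.range k, r ^ (k - 1 - j) * f (j+1) := by
      rw [hNdef]
      refine Finset.sum_congr rfl fun j _ => ?_
      rw [hf]
      simp only
      rw [Matrix.mulVec_mulVec, ← pow_succ]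
    have h1 : ∑ i ∈ Finset.range (k+1), r ^ (k - i) * f i
        = (∑ j ∈ Finset.range k, r ^ (k - 1 - j) * f (j+1)) + r ^ k * f 0 := by
      rw [Finset.sum_range_succ']
      congr 1
      refine Finset.sum_congr rfl fun j hj => ?_
      congr 2
      omega
    have h2 : ∑ i ∈ Finset.range (k+1), r ^ (k - i) * f i
        = (∑ j ∈ Finset.range k, r * (r ^ (k - 1 - j) * f j)) + f k := by
      rw [Finset.sum_range_succ]
      congr 1
      · refine Finset.sum_congr rfl fun j hj => ?_
        rw [Finset.mem_range] at hj
        have hkj : k - j = (k - 1 - j) + 1 := by omega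
        rw [hkj, pow_succ]
        ring
      · simp
    have h4 : r * N v = ∑ j ∈ Finset.range k, r * (r ^ (k - 1 - j) * f j) := by
      rw [hNdef, Finset.mul_sum]
    have hfk : f k ≤ r ^ k * f 0 := by
      have hh := hhalf v
      have hf0 : f 0 = ‖v‖ := by rw [hf]; simp [Matrix.one_mulVec]
      rw [hf0, hrk]
      exact hh
    have hsum := h1.symm.trans h2
    rw [h3, h4]
    linarith
  -- error sequence
  set e : ℕ → Fin M → ℝ := fun t => x t - xs with he
  set w : ℕ → Fin M → ℝ := fun t => Pt t *ᵥ xs + Bt t *ᵥ u - xs with hw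
  have herec : ∀ t, e (t+1) = (1 - α t) • e t + α t • (Pt t *ᵥ e t) + α t • w t := by
    intro t
    show x (t+1) - xs = (1 - α t) • (x t - xs) + α t • (Pt t *ᵥ (x t - xs))
      + α t • (Pt t *ᵥ xs + Bt t *ᵥ u - xs)
    rw [hrec t, Matrix.mulVec_sub]
    module
  have hw0 : Tendsto w atTop (nhds 0) := by
    have hPtxs := diland_tendsto_mulVec Pt P hPt xs
    have hBtu := diland_tendsto_mulVec Bt B hBt u
    have := (hPtxs.add hBtu).sub (tendsto_const_nhds (x := xs))
    rwa [hfix, sub_self] at this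
  -- entrywise distance of Pt to P
  set cA : ℕ → ℝ := fun t => ∑ i, ∑ j, |Pt t i j - P i j| with hcA
  have hcA0 : ∀ t, 0 ≤ cA t := fun t =>
    Finset.sum_nonneg fun i _ => Finset.sum_nonneg fun j _ => abs_nonneg _
  have hcAten : Tendsto cA atTop (nhds 0) := by
    have hent : ∀ i j, Tendsto (fun t => Pt t i j) atTop (nhds (P i j)) := fun i j =>
      tendsto_pi_nhds.mp (tendsto_pi_nhds.mp hPt i) j
    have : Tendsto cA atTop (nhds (∑ i : Fin M, ∑ j : Fin M, |P i j - P i j|)) := by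
      refine tendsto_finset_sum _ fun i _ => tendsto_finset_sum _ fun j _ => ?_
      exact ((hent i j).sub tendsto_const_nhds).abs
    simpa using this
  -- α facts
  have hαpos : ∀ t, 0 < α t := by
    intro t
    rw [hα t]
    have : (0:ℝ) < ((t:ℝ) + 1) ^ δ := Real.rpow_pos_of_pos (by positivity) _
    positivity
  have hα0 : Tendsto α atTop (nhds 0) := by
    have hbase : Tendsto (fun t : ℕ => ((t:ℝ) + 1) ^ δ) atTop atTop := by
      apply (tendsto_rpow_atTop hδ0).comp
      exact tendsto_atTop_add_const_right _ _ tendsto_natCast_atTop_atTop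
    have h := Tendsto.div_atTop (tendsto_const_nhds (x := a)) hbase
    exact Tendsto.congr (fun t => (hα t).symm) h
  -- constants
  set cc : ℝ := (1 - r)/2 with hcc
  have hcc0 : 0 < cc := by rw [hcc]; linarith
  have hcc1 : cc ≤ 1 := by rw [hcc]; linarith [hr0]
  have hrl0 : (0:ℝ) < r ^ (k-1) := pow_pos hr0 _
  -- choose T0
  have hev : ∀ᶠ t in atTop, α t ≤ 1 ∧ CN / r ^ (k-1) * cA t ≤ cc := by
    have h1 : ∀ᶠ t in atTop, α t ≤ 1 := by
      have := hα0.eventually_le_const (by norm_num : (0:ℝ) < 1)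
      filter_upwards [this] with t ht using ht
    have h2 : ∀ᶠ t in atTop, CN / r ^ (k-1) * cA t ≤ cc := by
      have hten : Tendsto (fun t => CN / r ^ (k-1) * cA t) atTop (nhds 0) := by
        have := hcAten.const_mul (CN / r ^ (k-1))
        simpa using this
      have := hten.eventually_le_const hcc0
      filter_upwards [this] with t ht using ht
    exact h1.and h2
  obtain ⟨T0, hT0⟩ := eventually_atTop.mp hev
  -- scalar sequences
  set y : ℕ → ℝ := fun t => N (e t) with hy
  set β : ℕ → ℝ := fun t => cc * α t with hβ
  set g : ℕ → ℝ := fun t => N (w t) / cc with hg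
  have hyβg : Tendsto y atTop (nhds 0) := by
    refine diland_scalar_rec_tendsto_zero T0 y β g (fun t => hN0 _)
      (fun t => mul_nonneg hcc0.le (hαpos t).le) ?_ ?_ ?_ ?_
    · intro t ht
      rw [hβ]
      exact mul_le_one₀ hcc1 (hαpos t).le (hT0 t ht).1
    · -- divergence of ∑ β
      have hbound : ∀ t : ℕ, cc * (a / ((t:ℝ)+1)) ≤ β t := by
        intro t
        rw [hβ]
        simp only
        refine mul_le_mul_of_nonneg_left ?_ hcc0.le
        rw [hα t]
        refine div_le_div_of_nonneg_left ha.le (Real.rpow_pos_of_pos (by positivity) _) ?_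
        calc ((t:ℝ)+1) ^ δ ≤ ((t:ℝ)+1) ^ (1:ℝ) :=
              Real.rpow_le_rpow_of_exponent_le (by push_cast; linarith [Nat.cast_nonneg (α := ℝ) t]) hδ1
          _ = (t:ℝ)+1 := Real.rpow_one _
      have hdiv1 : Tendsto (fun T => ∑ t ∈ Finset.range T, cc * (a / ((t:ℝ)+1))) atTop atTop := by
        have hH := Real.tendsto_sum_range_one_div_nat_succ_atTop
        have := hH.const_mul_atTop (by positivity : (0:ℝ) < cc * a)
        refine this.congr fun T => ?_
        rw [Finset.mul_sum]
        refine Finset.sum_congr rfl fun t _ => ?_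
        push_cast
        ring
      refine tendsto_atTop_mono ?_ hdiv1
      intro T
      exact Finset.sum_le_sum fun t _ => hbound t
    · -- g → 0
      have hwnorm : Tendsto (fun t => ‖w t‖) atTop (nhds 0) := by
        simpa using hw0.norm
      have hNw : Tendsto (fun t => N (w t)) atTop (nhds 0) := by
        refine squeeze_zero (fun t => hN0 _) (fun t => hNup _) ?_
        simpa using hwnorm.const_mul CN
      simpa [hg] using hNw.div_const cc
    · -- the recursion inequality
      intro t ht
      obtain ⟨hα1, hsmall⟩ := hT0 t ht
      have h01 : 0 ≤ 1 - α t := by linarith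
      have hPte : N (Pt t *ᵥ e t) ≤ (r + cc) * N (e t) := by
        have hsplit : Pt t *ᵥ e t = P *ᵥ e t + (Pt t - P) *ᵥ e t := by
          rw [Matrix.sub_mulVec]; abel
        have h1 : N ((Pt t - P) *ᵥ e t) ≤ CN * (cA t * ‖e t‖) := by
          refine (hNup _).trans ?_
          rw [hcA]
          exact mul_le_mul_of_nonneg_left (diland_mulVec_norm_le _ _) hCN0
        have h2 : ‖e t‖ ≤ N (e t) / r ^ (k-1) := by
          rw [le_div_iff₀ hrl0, mul_comm]
          exact hNlow _
        have h3 : N ((Pt t - P) *ᵥ e t) ≤ cc * N (e t) := by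
          have h4 : CN * (cA t * ‖e t‖) ≤ CN * (cA t * (N (e t) / r ^ (k-1))) := by
            refine mul_le_mul_of_nonneg_left (mul_le_mul_of_nonneg_left h2 (hcA0 t)) hCN0
          have h5 : CN * (cA t * (N (e t) / r ^ (k-1))) = (CN / r ^ (k-1) * cA t) * N (e t) := by
            field_simp
          have h6 : (CN / r ^ (k-1) * cA t) * N (e t) ≤ cc * N (e t) :=
            mul_le_mul_of_nonneg_right hsmall (hN0 _)
          linarith
        calc N (Pt t *ᵥ e t) ≤ N (P *ᵥ e t) + N ((Pt t - P) *ᵥ e t) := by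
              rw [hsplit]; exact hNadd _ _
          _ ≤ r * N (e t) + cc * N (e t) := add_le_add (hNP _) h3
          _ = (r + cc) * N (e t) := by ring
      have hstep : N (e (t+1)) ≤ (1 - α t) * N (e t) + α t * N (Pt t *ᵥ e t)
          + α t * N (w t) := by
        rw [herec t]
        calc N ((1 - α t) • e t + α t • (Pt t *ᵥ e t) + α t • w t)
            ≤ N ((1 - α t) • e t + α t • (Pt t *ᵥ e t)) + N (α t • w t) := hNadd _ _
          _ ≤ N ((1 - α t) • e t) + N (α t • (Pt t *ᵥ e t)) + N (α t • w t) := by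
              linarith [hNadd ((1 - α t) • e t) (α t • (Pt t *ᵥ e t))]
          _ = (1 - α t) * N (e t) + α t * N (Pt t *ᵥ e t) + α t * N (w t) := by
              rw [hNsmul, hNsmul, hNsmul, abs_of_nonneg h01, abs_of_nonneg (hαpos t).le]
      have hrcc : r + cc = 1 - cc := by rw [hcc]; ring
      have hgt : β t * g t = α t * N (w t) := by
        rw [hβ, hg]
        field_simp
      have : N (e (t+1)) ≤ (1 - β t) * N (e t) + α t * N (w t) := by
        have h7 : α t * N (Pt t *ᵥ e t) ≤ α t * ((r + cc) * N (e t)) :=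
          mul_le_mul_of_nonneg_left hPte (hαpos t).le
        have h8 : (1 - α t) * N (e t) + α t * ((r + cc) * N (e t))
            = (1 - β t) * N (e t) := by
          rw [hβ, hrcc]; ring
        linarith
      rw [hy, hgt]
      exact this
  -- conclude
  have henorm : Tendsto (fun t => ‖e t‖) atTop (nhds 0) := by
    refine squeeze_zero (g := fun t => N (e t) / r ^ (k-1)) (fun t => norm_nonneg _)
      (fun t => ?_) ?_
    · exact (le_div_iff₀ hrl0).mpr (by rw [mul_comm]; exact hNlow _)
    · simpa using hyβg.div_const (r ^ (k-1))
  have he0 : Tendsto e atTop (nhds 0) := by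
    rwa [tendsto_zero_iff_norm_tendsto_zero]
  have hxe : x = fun t => e t + xs := by
    funext t
    rw [he]
    simp
  rw [hxe]
  have := he0.add (tendsto_const_nhds (x := xs))
  simpa using this
end

section
/- Let (Ω, 𝓕, μ) be a probability space, let P be an M×M real matrix such that every eigenvalue of P, viewed as a matrix over ℂ, has modulus strictly less than 1, let B be an M×n real matrix, and let u ∈ ℝⁿ. Let (P_t)_{t≥0} and (B_t)_{t≥0} be sequences of measurable random M×M and M×n real matrices on Ω such that, μ-almost surely, P_t → P and B_t → B entrywise as t → ∞. Let α(t) = a/(t+1)^δ with a > 0 and 0 < δ ≤ 1, fix x(0) ∈ ℝ^M, and define the random sequence x(t+1) = (1 − α(t))·x(t) + α(t)·(P_t·x(t) + B_t·u). Then μ-almost surely, sup_{t≥0} ‖x(t)‖ < ∞. -/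
open Filter MeasureTheory

noncomputable def opB {M n : ℕ} (Q : Matrix (Fin M) (Fin n) ℝ) : ℝ :=
  ∑ i, ∑ j, |Q i j|

lemma opB_nonneg {M n : ℕ} (Q : Matrix (Fin M) (Fin n) ℝ) : 0 ≤ opB Q :=
  Finset.sum_nonneg fun _ _ => Finset.sum_nonneg fun _ _ => abs_nonneg _

lemma norm_mulVec_le {M n : ℕ} (Q : Matrix (Fin M) (Fin n) ℝ) (v : Fin n → ℝ) :
    ‖Q.mulVec v‖ ≤ opB Q * ‖v‖ := by
  rw [pi_norm_le_iff_of_nonneg (mul_nonneg (opB_nonneg Q) (norm_nonneg v))]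
  intro i
  have h1 : ‖Q.mulVec v i‖ ≤ ∑ j, |Q i j| * ‖v‖ := by
    rw [Real.norm_eq_abs]
    refine le_trans (Finset.abs_sum_le_sum_abs (fun j => Q i j * v j) Finset.univ) (Finset.sum_le_sum fun j _ => ?_)
    rw [abs_mul]
    exact mul_le_mul_of_nonneg_left ((Real.norm_eq_abs _ ▸ norm_le_pi_norm v j)) (abs_nonneg _)
  refine h1.trans ?_
  rw [← Finset.sum_mul]
  refine mul_le_mul_of_nonneg_right ?_ (norm_nonneg v)
  exact Finset.single_le_sum (f := fun i => ∑ j, |Q i j|)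
    (fun i _ => Finset.sum_nonneg fun _ _ => abs_nonneg _) (Finset.mem_univ i)

lemma euclNorm_le_sqrt_mul_norm {M : ℕ} (x : Fin M → ℝ) :
    euclNorm x ≤ Real.sqrt M * ‖x‖ := by
  have h1 : ∑ i, x i ^ 2 ≤ (M : ℝ) * ‖x‖ ^ 2 := by
    calc ∑ i, x i ^ 2 ≤ ∑ _i : Fin M, ‖x‖ ^ 2 := by
          refine Finset.sum_le_sum fun i _ => ?_
          rw [← sq_abs]
          exact pow_le_pow_left₀ (abs_nonneg _) (Real.norm_eq_abs (x i) ▸ norm_le_pi_norm x i) 2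
      _ = (M : ℝ) * ‖x‖ ^ 2 := by simp [mul_comm]
  calc euclNorm x ≤ Real.sqrt ((M : ℝ) * ‖x‖ ^ 2) := Real.sqrt_le_sqrt h1
    _ = Real.sqrt M * ‖x‖ := by
        rw [Real.sqrt_mul (Nat.cast_nonneg M), Real.sqrt_sq (norm_nonneg x)]

section SpecAux

attribute [local instance] Matrix.linftyOpNormedAddCommGroup Matrix.linftyOpNormedRing
  Matrix.linftyOpNormedAlgebra

variable {M : ℕ}

-- spectrum is contained in roots of charpoly
lemma mem_spectrum_isRoot [Nonempty (Fin M)] (A : Matrix (Fin M) (Fin M) ℂ) (z : ℂ)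
    (hz : z ∈ spectrum ℂ A) : A.charpoly.IsRoot z := by
  rw [spectrum.mem_iff] at hz
  have hdet : (algebraMap ℂ (Matrix (Fin M) (Fin M) ℂ) z - A).det = 0 := by
    by_contra h
    exact hz ((Matrix.isUnit_iff_isUnit_det _).2 (isUnit_iff_ne_zero.2 h))
  have : A.charpoly.eval z = (algebraMap ℂ (Matrix (Fin M) (Fin M) ℂ) z - A).det := by
    rw [Matrix.charpoly, eval_det, Matrix.matPolyEquiv_charmatrix]
    simp [Matrix.scalar]
    congr
  rw [Polynomial.IsRoot, this, hdet]

lemma exists_pow_lt_one [Nonempty (Fin M)] (P : Matrix (Fin M) (Fin M) ℝ)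
    (hP : SpecRadiusLtOne P) :
    ∃ m : ℕ, 1 ≤ m ∧ ‖((algebraMap ℝ ℂ).mapMatrix P : Matrix (Fin M) (Fin M) ℂ) ^ m‖ < 1 := by
  set A : Matrix (Fin M) (Fin M) ℂ := (algebraMap ℝ ℂ).mapMatrix P with hA
  have hAmap : A = P.map (algebraMap ℝ ℂ) := rfl
  -- every spectrum element has norm < 1
  have hspec : ∀ z ∈ spectrum ℂ A, ‖z‖ < 1 := by
    intro z hz
    have := hP z (hAmap ▸ mem_spectrum_isRoot A z hz)
    simpa using this
  -- spectral radius < 1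
  have hrad : spectralRadius ℂ A < 1 := by
    obtain ⟨z₀, hz₀mem, hz₀max⟩ :=
      (spectrum.isCompact (𝕜 := ℂ) A).exists_isMaxOn (spectrum.nonempty A)
        continuous_norm.continuousOn
    rw [isMaxOn_iff] at hz₀max
    have h1 : spectralRadius ℂ A ≤ (‖z₀‖₊ : ENNReal) := by
      refine iSup₂_le fun z hz => ?_
      exact_mod_cast (by exact_mod_cast hz₀max z hz : ‖z‖₊ ≤ ‖z₀‖₊)
    refine lt_of_le_of_lt h1 ?_
    have h2 : ‖z₀‖₊ < 1 := by
      have := hspec z₀ hz₀mem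
      rw [← norm_toNNReal]
      exact Real.toNNReal_lt_one.2 this
    exact_mod_cast h2
  -- Gelfand's formula
  have hgel := spectrum.pow_nnnorm_pow_one_div_tendsto_nhds_spectralRadius A
  have hev : ∀ᶠ m : ℕ in atTop, ((‖A ^ m‖₊ : ENNReal) ^ (1 / m : ℝ)) < 1 :=
    hgel.eventually_lt_const hrad
  obtain ⟨T, hT⟩ := eventually_atTop.1 hev
  refine ⟨max T 1, le_max_right _ _, ?_⟩
  set m := max T 1
  have hm1 : 1 ≤ m := le_max_right _ _
  have hmlt := hT m (le_max_left _ _)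
  have hmne : (m : ℝ) ≠ 0 := by positivity
  have hlt : (‖A ^ m‖₊ : ENNReal) < 1 := by
    have := ENNReal.rpow_lt_rpow hmlt (by positivity : (0:ℝ) < (m:ℝ))
    rwa [← ENNReal.rpow_mul, one_div, inv_mul_cancel₀ hmne, ENNReal.rpow_one,
      ENNReal.one_rpow] at this
  have : ‖A ^ m‖₊ < 1 := by exact_mod_cast hlt
  exact_mod_cast this

end SpecAux

section SpecAux2

attribute [local instance] Matrix.linftyOpNormedAddCommGroup Matrix.linftyOpNormedRing
  Matrix.linftyOpNormedAlgebra

variable {M : ℕ}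

lemma norm_coe_vec (w : Fin M → ℝ) : ‖(fun j => (w j : ℂ))‖ = ‖w‖ := by
  rcases isEmpty_or_nonempty (Fin M) with h | h
  · have h1 : (fun j => (w j : ℂ)) = 0 := funext fun i => isEmptyElim i
    have h2 : w = 0 := funext fun i => isEmptyElim i
    rw [h1, h2, norm_zero, norm_zero]
  rw [Pi.norm_def, Pi.norm_def]
  congr 1
  refine Finset.sup_congr rfl fun i _ => ?_
  simp

lemma mulVec_coe (Q : Matrix (Fin M) (Fin M) ℝ) (w : Fin M → ℝ) :
    (Q.map (algebraMap ℝ ℂ)).mulVec (fun j => (w j : ℂ)) =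
      fun i => ((Q.mulVec w i : ℝ) : ℂ) := by
  ext i
  simp [Matrix.mulVec, dotProduct]

lemma exists_pow_contraction (P : Matrix (Fin M) (Fin M) ℝ) (hP : SpecRadiusLtOne P) :
    ∃ (m : ℕ) (r : ℝ), 1 ≤ m ∧ 0 < r ∧ r < 1 ∧
      ∀ v : Fin M → ℝ, ‖(P ^ m).mulVec v‖ ≤ r ^ m * ‖v‖ := by
  rcases isEmpty_or_nonempty (Fin M) with hM | hM
  · refine ⟨1, 1/2, le_refl _, by norm_num, by norm_num, fun v => ?_⟩
    have h1 : (P ^ 1).mulVec v = 0 := Subsingleton.elim _ _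
    have h2 : v = 0 := Subsingleton.elim _ _
    rw [h1, h2]
    simp
  obtain ⟨m, hm1, hmlt⟩ := exists_pow_lt_one P hP
  set A : Matrix (Fin M) (Fin M) ℂ := (algebraMap ℝ ℂ).mapMatrix P with hA
  set q : ℝ := ‖A ^ m‖ with hq
  have hq0 : 0 ≤ q := norm_nonneg _
  have hq1 : q < 1 := hmlt
  set r : ℝ := max (1/2) (q ^ (1 / (m:ℝ))) with hr
  have hmne : (m : ℝ) ≠ 0 := by positivity
  have hr0 : 0 < r := lt_of_lt_of_le (by norm_num) (le_max_left _ _)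
  have hr1 : r < 1 := by
    refine max_lt (by norm_num) ?_
    exact Real.rpow_lt_one hq0 hq1 (by positivity)
  have hqr : q ≤ r ^ m := by
    have h1 : (q ^ (1 / (m:ℝ))) ^ m = q := by
      rw [← Real.rpow_natCast (q ^ (1 / (m:ℝ))) m, ← Real.rpow_mul hq0,
        one_div, inv_mul_cancel₀ hmne, Real.rpow_one]
    calc q = (q ^ (1 / (m:ℝ))) ^ m := h1.symm
      _ ≤ r ^ m := pow_le_pow_left₀ (Real.rpow_nonneg hq0 _) (le_max_right _ _) m
  refine ⟨m, r, hm1, hr0, hr1, fun v => ?_⟩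
  have hAm : A ^ m = (P ^ m).map (algebraMap ℝ ℂ) := by
    rw [hA, ← map_pow, RingHom.mapMatrix_apply]
  have hcv := Matrix.linfty_opNorm_mulVec (A ^ m) (fun j => (v j : ℂ))
  have heq : (A ^ m).mulVec (fun j => (v j : ℂ)) = fun i => (((P ^ m).mulVec v) i : ℂ) := by
    rw [hAm, mulVec_coe]
  rw [heq, norm_coe_vec ((P ^ m).mulVec v), norm_coe_vec v] at hcv
  calc ‖(P ^ m).mulVec v‖ ≤ q * ‖v‖ := hcv
    _ ≤ r ^ m * ‖v‖ := mul_le_mul_of_nonneg_right hqr (norm_nonneg v)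

end SpecAux2

noncomputable def auxN {M : ℕ} (P : Matrix (Fin M) (Fin M) ℝ) (m : ℕ) (r : ℝ)
    (v : Fin M → ℝ) : ℝ :=
  ∑ k ∈ Finset.range m, ‖(P ^ k).mulVec v‖ / r ^ k

section auxNlemmas

variable {M : ℕ} (P : Matrix (Fin M) (Fin M) ℝ) {m : ℕ} {r : ℝ}

lemma auxN_nonneg (hr0 : 0 < r) (v : Fin M → ℝ) : 0 ≤ auxN P m r v :=
  Finset.sum_nonneg fun k _ => div_nonneg (norm_nonneg _) (pow_pos hr0 k).le

lemma norm_le_auxN (hm : 1 ≤ m) (hr0 : 0 < r) (v : Fin M → ℝ) : ‖v‖ ≤ auxN P m r v := by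
  have h0 : ‖(P ^ 0).mulVec v‖ / r ^ 0 = ‖v‖ := by
    simp [Matrix.one_mulVec]
  calc ‖v‖ = ‖(P ^ 0).mulVec v‖ / r ^ 0 := h0.symm
    _ ≤ auxN P m r v := Finset.single_le_sum
        (f := fun k => ‖(P ^ k).mulVec v‖ / r ^ k)
        (fun k _ => div_nonneg (norm_nonneg _) (pow_pos hr0 k).le)
        (Finset.mem_range.2 hm)

lemma auxN_le (hr0 : 0 < r) (v : Fin M → ℝ) :
    auxN P m r v ≤ (∑ k ∈ Finset.range m, opB (P ^ k) / r ^ k) * ‖v‖ := by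
  rw [Finset.sum_mul]
  refine Finset.sum_le_sum fun k _ => ?_
  rw [div_mul_eq_mul_div]
  exact div_le_div_of_nonneg_right (norm_mulVec_le _ _) (pow_pos hr0 k).le
    |>.trans (le_of_eq rfl)

lemma auxN_add (hr0 : 0 < r) (v v' : Fin M → ℝ) :
    auxN P m r (v + v') ≤ auxN P m r v + auxN P m r v' := by
  rw [auxN, auxN, auxN, ← Finset.sum_add_distrib]
  refine Finset.sum_le_sum fun k _ => ?_
  rw [Matrix.mulVec_add, ← add_div]
  exact div_le_div_of_nonneg_right (norm_add_le _ _) (pow_pos hr0 k).le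

lemma auxN_smul (c : ℝ) (hc : 0 ≤ c) (v : Fin M → ℝ) :
    auxN P m r (c • v) = c * auxN P m r v := by
  rw [auxN, auxN, Finset.mul_sum]
  refine Finset.sum_congr rfl fun k _ => ?_
  rw [Matrix.mulVec_smul, norm_smul, Real.norm_eq_abs, abs_of_nonneg hc, mul_div_assoc]

lemma auxN_P (hm : 1 ≤ m) (hr0 : 0 < r)
    (hPm : ∀ v : Fin M → ℝ, ‖(P ^ m).mulVec v‖ ≤ r ^ m * ‖v‖) (v : Fin M → ℝ) :
    auxN P m r (P.mulVec v) ≤ r * auxN P m r v := by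
  obtain ⟨m', rfl⟩ : ∃ m', m = m' + 1 := ⟨m - 1, by omega⟩
  have hrk : ∀ k : ℕ, (0:ℝ) < r ^ k := fun k => pow_pos hr0 k
  have ha : ∀ k : ℕ, (P ^ k).mulVec (P.mulVec v) = (P ^ (k+1)).mulVec v := by
    intro k
    rw [Matrix.mulVec_mulVec, ← pow_succ]
  have hL : auxN P (m'+1) r (P.mulVec v) =
      (∑ k ∈ Finset.range m', ‖(P ^ (k+1)).mulVec v‖ / r ^ k)
        + ‖(P ^ (m'+1)).mulVec v‖ / r ^ m' := by
    rw [auxN]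
    simp only [ha]
    rw [Finset.sum_range_succ]
  have hR : r * auxN P (m'+1) r v = r * ‖v‖
      + ∑ k ∈ Finset.range m', ‖(P ^ (k+1)).mulVec v‖ / r ^ k := by
    rw [auxN, Finset.sum_range_succ', mul_add, Finset.mul_sum]
    have e1 : r * (‖(P ^ 0).mulVec v‖ / r ^ 0) = r * ‖v‖ := by
      simp [Matrix.one_mulVec]
    have e2 : ∀ k : ℕ, r * (‖(P ^ (k+1)).mulVec v‖ / r ^ (k+1))
        = ‖(P ^ (k+1)).mulVec v‖ / r ^ k := by
      intro k
      rw [pow_succ]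
      field_simp
      ring
    rw [e1, add_comm]
    congr 1
    exact Finset.sum_congr rfl fun k _ => e2 k
  have hlast : ‖(P ^ (m'+1)).mulVec v‖ / r ^ m' ≤ r * ‖v‖ := by
    rw [div_le_iff₀ (hrk m')]
    calc ‖(P ^ (m'+1)).mulVec v‖ ≤ r ^ (m'+1) * ‖v‖ := hPm v
      _ = r * ‖v‖ * r ^ m' := by ring
  rw [hL, hR]
  linarith

end auxNlemmas

lemma key_bounded' {M : ℕ} (P : Matrix (Fin M) (Fin M) ℝ) (m : ℕ) (r : ℝ)
    (hm : 1 ≤ m) (hr0 : 0 < r) (hr1 : r < 1)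
    (hPm : ∀ v : Fin M → ℝ, ‖(P ^ m).mulVec v‖ ≤ r ^ m * ‖v‖)
    (α : ℕ → ℝ) (hαnn : ∀ t, 0 ≤ α t) (hα0 : Tendsto α atTop (nhds 0))
    (Q : ℕ → Matrix (Fin M) (Fin M) ℝ) (w : ℕ → Fin M → ℝ)
    (hQ : Tendsto (fun t => opB (Q t - P)) atTop (nhds 0))
    (K : ℝ) (hK0 : 0 ≤ K) (hw : ∀ᶠ t in atTop, ‖w t‖ ≤ K)
    (y : ℕ → Fin M → ℝ)
    (hrec : ∀ t, y (t + 1) = (1 - α t) • y t + α t • ((Q t).mulVec (y t) + w t)) :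
    ∃ C : ℝ, ∀ t, ‖y t‖ ≤ C := by
  classical
  set D : ℝ := max (∑ k ∈ Finset.range m, opB (P ^ k) / r ^ k) 1 with hD
  have hD1 : (1:ℝ) ≤ D := le_max_right _ _
  have hD0 : (0:ℝ) < D := lt_of_lt_of_le one_pos hD1
  have N_le : ∀ v, auxN P m r v ≤ D * ‖v‖ := fun v =>
    (auxN_le P hr0 v).trans
      (mul_le_mul_of_nonneg_right (le_max_left _ _) (norm_nonneg v))
  set β : ℝ := (1 - r) / 2 with hβ
  have hβ0 : 0 < β := by rw [hβ]; linarith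
  have hβ1 : β < 1 := by rw [hβ]; linarith
  have hev1 : ∀ᶠ t in atTop, opB (Q t - P) ≤ β / D :=
    hQ.eventually_le_const (by positivity)
  have hev2 : ∀ᶠ t in atTop, α t ≤ 1 := hα0.eventually_le_const one_pos
  obtain ⟨T, hT⟩ := eventually_atTop.1 (hev1.and (hev2.and hw))
  set L : ℝ := max (auxN P m r (y T)) (D * K / β) with hL
  have main : ∀ s : ℕ, auxN P m r (y (T + s)) ≤ L := by
    intro s
    induction s with
    | zero => exact le_max_left _ _
    | succ s ih =>
      have htT : T ≤ T + s := by omega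
      obtain ⟨hQt, hαt, hwt⟩ := hT (T + s) htT
      set t := T + s with ht
      have hstep : auxN P m r (y (t + 1)) ≤
          (1 - α t * β) * auxN P m r (y t) + α t * (D * K) := by
        have hsplit : y (t+1) = (1 - α t) • y t
            + α t • (P.mulVec (y t) + ((Q t - P).mulVec (y t) + w t)) := by
          rw [hrec t]
          congr 1
          congr 1
          rw [Matrix.sub_mulVec]
          abel
        have h1 : auxN P m r (y (t+1)) ≤ (1 - α t) * auxN P m r (y t)
            + α t * (auxN P m r (P.mulVec (y t))
              + (auxN P m r ((Q t - P).mulVec (y t)) + auxN P m r (w t))) := by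
          rw [hsplit]
          refine (auxN_add P hr0 _ _).trans ?_
          rw [auxN_smul P (1 - α t) (by linarith) (y t)]
          refine add_le_add_right ?_ _
          rw [auxN_smul P (α t) (hαnn t)]
          refine mul_le_mul_of_nonneg_left ?_ (hαnn t)
          refine (auxN_add P hr0 _ _).trans ?_
          exact add_le_add_right (auxN_add P hr0 _ _) _
        have h2 : auxN P m r (P.mulVec (y t)) ≤ r * auxN P m r (y t) :=
          auxN_P P hm hr0 hPm (y t)
        have h3 : auxN P m r ((Q t - P).mulVec (y t)) ≤ β * auxN P m r (y t) := by
          refine (N_le _).trans ?_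
          calc D * ‖(Q t - P).mulVec (y t)‖ ≤ D * (opB (Q t - P) * ‖y t‖) :=
                mul_le_mul_of_nonneg_left (norm_mulVec_le _ _) hD0.le
            _ ≤ D * ((β / D) * ‖y t‖) :=
                mul_le_mul_of_nonneg_left
                  (mul_le_mul_of_nonneg_right hQt (norm_nonneg _)) hD0.le
            _ = β * ‖y t‖ := by field_simp
            _ ≤ β * auxN P m r (y t) :=
                mul_le_mul_of_nonneg_left (norm_le_auxN P hm hr0 _) hβ0.le
        have h4 : auxN P m r (w t) ≤ D * K := (N_le _).trans
          (mul_le_mul_of_nonneg_left hwt hD0.le)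
        have hNy : 0 ≤ auxN P m r (y t) := auxN_nonneg P hr0 _
        have hαt0 := hαnn t
        have hsum : auxN P m r (P.mulVec (y t))
            + (auxN P m r ((Q t - P).mulVec (y t)) + auxN P m r (w t))
            ≤ (r + β) * auxN P m r (y t) + D * K := by linarith
        have hmul := mul_le_mul_of_nonneg_left hsum hαt0
        have hid : (1 - α t) * auxN P m r (y t)
            + α t * ((r + β) * auxN P m r (y t) + D * K)
            = (1 - α t * β) * auxN P m r (y t) + α t * (D * K) := by
          rw [hβ]; ring
        linarith
      have hfin : (1 - α t * β) * auxN P m r (y t) + α t * (D * K) ≤ L := by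
        have hαβ : α t * β ≤ 1 := by nlinarith [hαnn t]
        have h5 : D * K / β ≤ L := le_max_right _ _
        have h6 : auxN P m r (y t) ≤ L := ih
        have h7 : 0 ≤ L := le_trans (auxN_nonneg P hr0 _) (le_max_left _ _)
        have h8 : D * K ≤ β * L := by
          rw [div_le_iff₀ hβ0] at h5
          linarith [h5]
        have h9 : (1 - α t * β) * auxN P m r (y t) ≤ (1 - α t * β) * L :=
          mul_le_mul_of_nonneg_left h6 (by linarith [hαβ])
        have h10 : α t * (D * K) ≤ α t * (β * L) :=
          mul_le_mul_of_nonneg_left h8 (hαnn t)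
        have hid2 : (1 - α t * β) * L + α t * (β * L) = L := by ring
        linarith
      have hts : T + (s + 1) = t + 1 := by omega
      rw [hts]
      exact hstep.trans hfin
  refine ⟨(∑ k ∈ Finset.range (T + 1), ‖y k‖) + L, fun t => ?_⟩
  have hL0 : 0 ≤ L := le_trans (auxN_nonneg P hr0 _) (le_max_left _ _)
  have hsum0 : 0 ≤ ∑ k ∈ Finset.range (T + 1), ‖y k‖ :=
    Finset.sum_nonneg fun _ _ => norm_nonneg _
  rcases le_or_gt t T with h | h
  · have : ‖y t‖ ≤ ∑ k ∈ Finset.range (T + 1), ‖y k‖ :=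
      Finset.single_le_sum (fun k _ => norm_nonneg _) (Finset.mem_range.2 (by omega))
    linarith
  · obtain ⟨s, rfl⟩ : ∃ s, t = T + s := ⟨t - T, by omega⟩
    have := (norm_le_auxN P hm hr0 _).trans (main s)
    linarith

/-- Boundedness lemma for DILAND with noisy distance measurements: on a
probability space `(Ω, 𝓕, μ)`, if `ρ(P) < 1` and the random matrices `P_t, B_t`
converge to `P, B` almost surely, then with `α(t) = a/(t+1)^δ` (`a > 0`,
`0 < δ ≤ 1`) the random iterates
`x(t+1) = (1 - α(t))·x(t) + α(t)·(P_t·x(t) + B_t·u)` are almost surely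
bounded in the Euclidean norm. -/
theorem diland_as_bounded
    {Ω : Type*} [MeasurableSpace Ω] (μ : Measure Ω) [IsProbabilityMeasure μ]
    (M n : ℕ) (P : Matrix (Fin M) (Fin M) ℝ) (hP : SpecRadiusLtOne P)
    (B : Matrix (Fin M) (Fin n) ℝ) (u : Fin n → ℝ)
    (Pt : ℕ → Ω → Matrix (Fin M) (Fin M) ℝ)
    (Bt : ℕ → Ω → Matrix (Fin M) (Fin n) ℝ)
    (hPtmeas : ∀ (t : ℕ) (i j : Fin M), Measurable fun ω => Pt t ω i j)
    (hBtmeas : ∀ (t : ℕ) (i : Fin M) (k : Fin n), Measurable fun ω => Bt t ω i k)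
    (hconv : ∀ᵐ ω ∂μ,
      Tendsto (fun t => Pt t ω) atTop (nhds P) ∧
      Tendsto (fun t => Bt t ω) atTop (nhds B))
    (a δ : ℝ) (ha : 0 < a) (hδ0 : 0 < δ) (hδ1 : δ ≤ 1)
    (α : ℕ → ℝ) (hα : ∀ t : ℕ, α t = a / ((t : ℝ) + 1) ^ δ)
    (x0 : Fin M → ℝ) (x : ℕ → Ω → Fin M → ℝ)
    (hx0 : ∀ ω, x 0 ω = x0)
    (hrec : ∀ (t : ℕ) (ω : Ω), x (t + 1) ω =
      (1 - α t) • x t ω + α t • ((Pt t ω).mulVec (x t ω) + (Bt t ω).mulVec u)) :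
    ∀ᵐ ω ∂μ, ∃ C : ℝ, ∀ t : ℕ, euclNorm (x t ω) ≤ C := by

  obtain ⟨m, r, hm, hr0, hr1, hPm⟩ := exists_pow_contraction P hP
  have hαnn : ∀ t, 0 ≤ α t := by
    intro t
    rw [hα t]
    positivity
  have hα0 : Tendsto α atTop (nhds 0) := by
    have h1 : Tendsto (fun t : ℕ => ((t : ℝ) + 1)) atTop atTop :=
      tendsto_atTop_add_const_right atTop 1 tendsto_natCast_atTop_atTop
    have h2 : Tendsto (fun t : ℕ => ((t : ℝ) + 1) ^ δ) atTop atTop :=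
      (tendsto_rpow_atTop hδ0).comp h1
    have h3 := h2.inv_tendsto_atTop
    have h4 : Tendsto (fun t : ℕ => a * (((t : ℝ) + 1) ^ δ)⁻¹) atTop (nhds (a * 0)) :=
      h3.const_mul a
    rw [mul_zero] at h4
    exact h4.congr fun t => by rw [hα t, div_eq_mul_inv]
  filter_upwards [hconv] with ω hω
  obtain ⟨hPω, hBω⟩ := hω
  have hPent : ∀ i j, Tendsto (fun t => Pt t ω i j) atTop (nhds (P i j)) := fun i j =>
    ((continuous_id.matrix_elem i j).tendsto P).comp hPω
  have hBent : ∀ i k, Tendsto (fun t => Bt t ω i k) atTop (nhds (B i k)) := fun i k =>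
    ((continuous_id.matrix_elem i k).tendsto B).comp hBω
  have hQ : Tendsto (fun t => opB (Pt t ω - P)) atTop (nhds 0) := by
    have h : Tendsto (fun t => ∑ i : Fin M, ∑ j : Fin M, |Pt t ω i j - P i j|) atTop
        (nhds (∑ i : Fin M, ∑ j : Fin M, |P i j - P i j|)) := by
      refine tendsto_finset_sum _ fun i _ => tendsto_finset_sum _ fun j _ => ?_
      exact ((hPent i j).sub tendsto_const_nhds).abs
    simp only [sub_self, abs_zero, Finset.sum_const_zero] at h
    refine h.congr fun t => ?_
    simp [opB, Matrix.sub_apply]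
  have hQB : Tendsto (fun t => opB (Bt t ω - B)) atTop (nhds 0) := by
    have h : Tendsto (fun t => ∑ i : Fin M, ∑ k : Fin n, |Bt t ω i k - B i k|) atTop
        (nhds (∑ i : Fin M, ∑ k : Fin n, |B i k - B i k|)) := by
      refine tendsto_finset_sum _ fun i _ => tendsto_finset_sum _ fun k _ => ?_
      exact ((hBent i k).sub tendsto_const_nhds).abs
    simp only [sub_self, abs_zero, Finset.sum_const_zero] at h
    refine h.congr fun t => ?_
    simp [opB, Matrix.sub_apply]
  have hwbound : ∀ t, ‖(Bt t ω).mulVec u‖ ≤ opB (Bt t ω - B) * ‖u‖ + opB B * ‖u‖ := by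
    intro t
    have hsplit : (Bt t ω).mulVec u = (Bt t ω - B).mulVec u + B.mulVec u := by
      rw [Matrix.sub_mulVec]
      abel
    rw [hsplit]
    exact (norm_add_le _ _).trans (add_le_add (norm_mulVec_le _ _) (norm_mulVec_le _ _))
  have hev : ∀ᶠ t in atTop, opB (Bt t ω - B) ≤ 1 := hQB.eventually_le_const one_pos
  have hK0 : 0 ≤ ‖u‖ + opB B * ‖u‖ :=
    add_nonneg (norm_nonneg u) (mul_nonneg (opB_nonneg B) (norm_nonneg u))
  have hw : ∀ᶠ t in atTop, ‖(Bt t ω).mulVec u‖ ≤ ‖u‖ + opB B * ‖u‖ := by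
    filter_upwards [hev] with t ht
    have h1 := hwbound t
    have h2 : opB (Bt t ω - B) * ‖u‖ ≤ 1 * ‖u‖ :=
      mul_le_mul_of_nonneg_right ht (norm_nonneg u)
    rw [one_mul] at h2
    linarith
  obtain ⟨C, hC⟩ := key_bounded' P m r hm hr0 hr1 hPm α hαnn hα0 (fun t => Pt t ω)
    (fun t => (Bt t ω).mulVec u) hQ (‖u‖ + opB B * ‖u‖) hK0 hw (fun t => x t ω)
    (fun t => hrec t ω)
  refine ⟨Real.sqrt M * C, fun t => ?_⟩
  exact (euclNorm_le_sqrt_mul_norm _).trans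
    (mul_le_mul_of_nonneg_left (hC t) (Real.sqrt_nonneg _))
end
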